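/- arXiv:1208.0148 — 7 statements merged into one kernel-verified Lean document; each statement's English description precedes it below -/
import Mathlib

section
/- If f is analytic on the unit disk D with f(z) = z + b z^2 + ..., |b| ≤ 1, f'(z) ≠ 0 on D, and Re(z f''(z)/f'(z) + 1) > (|b|-1)/(|b|+1) for all z in D, then Re(√(f'(z))) > 1/2 for all z in D, where the branch of the square root is chosen so that √1 = 1. -/
open Complex Metric Set Filter Topology

/-- Schwarz–Pick algebra: if `|ζ - c| ≤ t |1 - c̄ ζ|` with `|c| < 1`, `0 ≤ t ≤ 1`,
then `|ζ| ≤ (|c| + t)/(1 + |c| t)`. -/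
lemma mobius_bound (c ζ : ℂ) (t : ℝ) (ht0 : 0 ≤ t) (ht1 : t ≤ 1)
    (hc : ‖c‖ < 1)
    (h : ‖ζ - c‖ ≤ t * ‖1 - (starRingEnd ℂ) c * ζ‖) :
    ‖ζ‖ ≤ (‖c‖ + t) / (1 + ‖c‖ * t) := by
  set a := ‖c‖ with ha
  set x := ‖ζ‖ with hx
  have ha0 : 0 ≤ a := norm_nonneg c
  have hx0 : 0 ≤ x := norm_nonneg ζ
  have hden : 0 < 1 + a * t := by nlinarith
  rw [le_div_iff₀ hden]
  set s := ((starRingEnd ℂ) c * ζ).re with hs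
  have hsle : s ≤ a * x := by
    calc s ≤ ‖(starRingEnd ℂ) c * ζ‖ := Complex.re_le_norm _
    _ = a * x := by rw [norm_mul, Complex.norm_conj]
  have h2 : (‖ζ - c‖)^2 ≤ t^2 * (‖1 - (starRingEnd ℂ) c * ζ‖)^2 := by
    have := pow_le_pow_left₀ (norm_nonneg _) h 2
    rwa [mul_pow] at this
  have e1 : (‖ζ - c‖)^2 = x^2 - 2*s + a^2 := by
    rw [Complex.sq_norm, Complex.sq_norm, Complex.sq_norm, Complex.normSq_sub]
    simp [Complex.normSq_apply, hs, Complex.mul_re, Complex.conj_re, Complex.conj_im]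
    ring
  have e2 : (‖1 - (starRingEnd ℂ) c * ζ‖)^2 = 1 - 2*s + a^2*x^2 := by
    rw [Complex.sq_norm, Complex.sq_norm, Complex.sq_norm, Complex.normSq_sub]
    simp [Complex.normSq_apply, hs, Complex.mul_re, Complex.mul_im, Complex.conj_re,
      Complex.conj_im]
    ring
  rw [e1, e2] at h2
  have hP : ((1+a*t)*x-(a+t))*((1-a*t)*x-(a-t)) ≤ 0 := by
    nlinarith [mul_nonneg (sub_nonneg.2 ht1) ht0]
  by_contra hcon
  push_neg at hcon
  have h1 : 0 < (1+a*t)*x - (a+t) := by linarith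
  have hat : a*t < 1 := lt_of_le_of_lt (by nlinarith) hc
  have h2' : (1-a*t)*x - (a-t) ≤ 0 := by
    by_contra h3
    push_neg at h3
    nlinarith
  nlinarith [mul_pos h1 (sub_pos.2 hat), mul_nonneg (mul_nonneg ha0 ht0) (sub_nonneg.2 hc.le)]

/-- If `F ≥ 0` on `(0,1)`, `F 1 = 0` and `F` is differentiable at `1`, then `F' 1 ≤ 0`. -/
lemma deriv_nonpos_of_nonneg_left {F : ℝ → ℝ} {d : ℝ} (hF : HasDerivAt F d 1)
    (h0 : F 1 = 0) (hnn : ∀ ρ ∈ Set.Ioo (0:ℝ) 1, 0 ≤ F ρ) : d ≤ 0 := by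
  have ht : Tendsto (slope F 1) (𝓝[≠] 1) (𝓝 d) := hasDerivAt_iff_tendsto_slope.mp hF
  have hmono : 𝓝[Set.Ioo (0:ℝ) 1] (1:ℝ) ≤ 𝓝[≠] (1:ℝ) :=
    nhdsWithin_mono _ (fun x hx => ne_of_lt hx.2)
  haveI : (𝓝[Set.Ioo (0:ℝ) 1] (1:ℝ)).NeBot := right_nhdsWithin_Ioo_neBot one_pos
  refine le_of_tendsto (ht.mono_left hmono) ?_
  filter_upwards [self_mem_nhdsWithin] with ρ hρ
  have h1 : ρ - 1 < 0 := by linarith [hρ.2]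
  have h2 : 0 ≤ F ρ := hnn ρ hρ
  rw [slope_def_field, div_nonpos_iff]
  left
  exact ⟨by simpa [h0] using h2, by linarith⟩

/-- Maximum-modulus bound for `dslope`. -/
lemma dslope_bound {w : ℂ → ℂ} {r₀ C : ℝ} (hr : 0 < r₀)
    (hd : DifferentiableOn ℂ w (closedBall 0 r₀))
    (hw0 : w 0 = 0)
    (hbd : ∀ z : ℂ, ‖z‖ = r₀ → ‖w z‖ ≤ C) :
    ∀ z ∈ closedBall (0:ℂ) r₀, ‖dslope w 0 z‖ ≤ C / r₀ := by
  intro z hz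
  have hmem : closedBall (0:ℂ) r₀ ∈ 𝓝 (0:ℂ) := closedBall_mem_nhds _ hr
  have hG : DifferentiableOn ℂ (dslope w 0) (closedBall 0 r₀) :=
    (Complex.differentiableOn_dslope hmem).mpr hd
  have hb : Bornology.IsBounded (ball (0:ℂ) r₀) := isBounded_ball
  have hcl : closure (ball (0:ℂ) r₀) = closedBall 0 r₀ := closure_ball 0 hr.ne'
  have hdc : DiffContOnCl ℂ (dslope w 0) (ball 0 r₀) := by
    refine ⟨hG.mono ball_subset_closedBall, ?_⟩
    rw [hcl]
    exact hG.continuousOn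
  refine Complex.norm_le_of_forall_mem_frontier_norm_le hb hdc ?_ ?_
  · intro ζ hζ
    rw [frontier_ball _ hr.ne'] at hζ
    have hζn : ‖ζ‖ = r₀ := by simpa using hζ
    have hζ0 : ζ ≠ 0 := by intro h; rw [h] at hζn; simp at hζn; exact hr.ne' hζn.symm
    rw [dslope_of_ne _ hζ0, slope_def_field]
    simp only [hw0, sub_zero]
    rw [norm_div, hζn]
    gcongr
    exact hbd ζ hζn
  · rw [hcl]; exact hz

/-- Existence of a minimal-modulus point where `Re p = 1/2`. -/
lemma exists_min_point (p : ℂ → ℂ) (hpc : ContinuousOn p (ball 0 1)) (hp0 : p 0 = 1)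
    (z₁ : ℂ) (hz₁ : z₁ ∈ ball (0:ℂ) 1) (hbad : (p z₁).re ≤ 1/2) :
    ∃ z₀ : ℂ, 0 < ‖z₀‖ ∧ ‖z₀‖ ≤ ‖z₁‖ ∧ (p z₀).re = 1/2 ∧
      (∀ z : ℂ, ‖z‖ < ‖z₀‖ → 1/2 < (p z).re) ∧
      (∀ z : ℂ, ‖z‖ ≤ ‖z₀‖ → 1/2 ≤ (p z).re) := by
  have hz₁n : ‖z₁‖ < 1 := by simpa using hz₁
  have hsub : closedBall (0:ℂ) ‖z₁‖ ⊆ ball 0 1 := closedBall_subset_ball hz₁n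
  have hpc' : ContinuousOn (fun z => (p z).re) (closedBall 0 ‖z₁‖) :=
    (Complex.continuous_re.comp_continuousOn (hpc.mono hsub))
  set K := closedBall (0:ℂ) ‖z₁‖ ∩ (fun z => (p z).re) ⁻¹' (Iic (1/2)) with hKdef
  have hKc : IsCompact K := (isCompact_closedBall _ _).of_isClosed_subset
      (hpc'.preimage_isClosed_of_isClosed isClosed_closedBall isClosed_Iic) inter_subset_left
  have hKne : K.Nonempty := ⟨z₁, by simp, hbad⟩
  obtain ⟨z₀, hz₀K, hz₀min⟩ := hKc.exists_isMinOn (f := fun z => ‖z‖) hKne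
      (continuous_norm.continuousOn)
  have hlt : ∀ z : ℂ, ‖z‖ < ‖z₀‖ → 1/2 < (p z).re := by
    intro z hz
    by_contra hle
    push_neg at hle
    have hzK : z ∈ K := ⟨by
      simp only [mem_closedBall, dist_zero_right]
      calc ‖z‖ ≤ ‖z₀‖ := hz.le
      _ ≤ ‖z₁‖ := by simpa using hz₀K.1, hle⟩
    exact absurd (hz₀min hzK) (by simpa using hz)
  have IVT : ∀ z : ℂ, ‖z‖ ≤ ‖z₀‖ → (p z).re ≤ 1/2 → (p z).re = 1/2 := by
    intro z hzle hzre
    rcases eq_or_lt_of_le hzre with h | h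
    · exact h
    · exfalso
      have hz0 : z ≠ 0 := by
        intro h; rw [h] at hzre; simp [hp0] at hzre; linarith
      have hcont : ContinuousOn (fun t : ℝ => (p ((t:ℂ) * z)).re) (Icc 0 1) := by
        apply Complex.continuous_re.comp_continuousOn
        apply hpc.comp (by fun_prop)
        intro t ht
        simp only [mem_ball, dist_zero_right] at *
        calc ‖(t:ℂ) * z‖ = |t| * ‖z‖ := by simp [norm_mul]
        _ ≤ 1 * ‖z‖ := by
            apply mul_le_mul_of_nonneg_right _ (norm_nonneg z)
            rw [abs_le]; exact ⟨by linarith [ht.1], ht.2⟩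
        _ < 1 := by
            rw [one_mul]
            calc ‖z‖ ≤ ‖z₁‖ := le_trans hzle (by simpa using hz₀K.1)
            _ < 1 := hz₁n
      have hmem : (1/2 : ℝ) ∈ Icc ((fun t : ℝ => (p ((t:ℂ) * z)).re) 1)
          ((fun t : ℝ => (p ((t:ℂ) * z)).re) 0) := by
        constructor
        · simpa using h.le
        · simp [hp0]; norm_num
      obtain ⟨t, htI, ht⟩ := intermediate_value_Icc' (zero_le_one) hcont hmem
      have ht1 : t < 1 := by
        rcases lt_or_eq_of_le htI.2 with h' | h'
        · exact h'
        · exfalso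
          rw [h'] at ht
          simp only [Complex.ofReal_one, one_mul] at ht
          rw [ht] at h; linarith
      have hnorm : ‖(t:ℂ) * z‖ < ‖z₀‖ := by
        rw [norm_mul, Complex.norm_real, Real.norm_eq_abs, _root_.abs_of_nonneg htI.1]
        calc t * ‖z‖ < 1 * ‖z‖ := by
              apply mul_lt_mul_of_pos_right ht1 (norm_pos_iff.mpr hz0)
        _ = ‖z‖ := one_mul _
        _ ≤ ‖z₀‖ := hzle
      have := hlt _ hnorm
      simp only at ht
      rw [ht] at this
      linarith
  have hz₀0 : 0 < ‖z₀‖ := by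
    rcases eq_or_lt_of_le (norm_nonneg z₀) with h | h
    · exfalso
      have hz00 : z₀ = 0 := by simpa using h.symm
      have h2 := hz₀K.2
      rw [hz00] at h2
      simp only [mem_preimage, mem_Iic, hp0] at h2
      norm_num at h2
    · exact h
  refine ⟨z₀, hz₀0, by simpa using hz₀K.1, IVT z₀ le_rfl hz₀K.2, hlt, ?_⟩
  intro z hz
  by_cases hc : (p z).re ≤ 1/2
  · exact (IVT z hz hc).ge
  · push_neg at hc; exact hc.le

/-- Chain rule `ℝ → ℂ → ℂ`. -/
lemma hasDerivAt_comp_real {w : ℂ → ℂ} {γ : ℝ → ℂ} {z d : ℂ} {t : ℝ} (hγ : HasDerivAt γ d t)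
    (hw : HasDerivAt w z (γ t)) : HasDerivAt (fun s => w (γ s)) (z * d) t := by
  exact hw.comp t hγ

/-- Derivative of `normSq ∘ γ`. -/
lemma hasDerivAt_normSq_comp {γ : ℝ → ℂ} {d : ℂ} {t : ℝ} (hγ : HasDerivAt γ d t) :
    HasDerivAt (fun s => Complex.normSq (γ s)) (2 * ((starRingEnd ℂ) (γ t) * d).re) t := by
  have hre : HasDerivAt (fun s => (γ s).re) d.re t :=
    (Complex.reCLM.hasFDerivAt.comp_hasDerivAt t hγ)
  have him : HasDerivAt (fun s => (γ s).im) d.im t :=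
    (Complex.imCLM.hasFDerivAt.comp_hasDerivAt t hγ)
  have h1 : HasDerivAt (fun s => (γ s).re^2 + (γ s).im^2)
      (2*(γ t).re*d.re + 2*(γ t).im*d.im) t := by
    simpa [mul_comm, mul_assoc, mul_left_comm] using ((hre.fun_pow 2).fun_add (him.fun_pow 2))
  have h2 : (2:ℝ) * ((starRingEnd ℂ) (γ t) * d).re = 2*(γ t).re*d.re + 2*(γ t).im*d.im := by
    simp [Complex.mul_re, Complex.conj_re, Complex.conj_im]; ring
  rw [h2]
  exact h1.congr_of_eventuallyEq (by
    filter_upwards with s; simp [Complex.normSq_apply, sq])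

/-- `|g - c| ≤ |1 - c̄ g|` when both lie in the closed unit disk. -/
lemma abs_sub_le_abs_one_sub (c g : ℂ) (hc : ‖c‖ ≤ 1) (hg : ‖g‖ ≤ 1) :
    ‖g - c‖ ≤ ‖1 - (starRingEnd ℂ) c * g‖ := by
  have h1 : Complex.normSq (g - c) ≤ Complex.normSq (1 - (starRingEnd ℂ) c * g) := by
    have e1 : Complex.normSq (g - c)
        = Complex.normSq g - 2*(c.re*g.re + c.im*g.im) + Complex.normSq c := by
      simp [Complex.normSq_apply, Complex.sub_re, Complex.sub_im]; ring
    have e2 : Complex.normSq (1 - (starRingEnd ℂ) c * g)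
        = 1 - 2*(c.re*g.re + c.im*g.im) + Complex.normSq c * Complex.normSq g := by
      simp [Complex.normSq_apply, Complex.sub_re, Complex.sub_im, Complex.mul_re, Complex.mul_im,
        Complex.conj_re, Complex.conj_im]
      ring
    rw [e1, e2]
    have hc2 : Complex.normSq c ≤ 1 := by
      rw [← Complex.sq_norm]; nlinarith [norm_nonneg c]
    have hg2 : Complex.normSq g ≤ 1 := by
      rw [← Complex.sq_norm]; nlinarith [norm_nonneg g]
    nlinarith
  have := Real.sqrt_le_sqrt h1
  simpa [Complex.norm_def] using this

set_option maxHeartbeats 1600000 in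
/-- If `f(z) = z + b z² + ⋯` is analytic on the unit disk, `|b| ≤ 1`,
`f' ≠ 0` on the disk, and `Re(z f''(z)/f'(z) + 1) > (|b|-1)/(|b|+1)` on the disk,
then `Re √(f'(z)) > 1/2` on the disk, where `√(f')` is the analytic branch `p`
with `p² = f'` and `p(0) = 1`. -/
theorem stmt_1 (f p : ℂ → ℂ) (b : ℂ)
    (hf : AnalyticOn ℂ f (ball 0 1))
    (hf0 : f 0 = 0) (hf1 : deriv f 0 = 1)
    (hfb : deriv (deriv f) 0 = 2 * b)
    (hb : ‖b‖ ≤ 1)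
    (hf' : ∀ z ∈ ball (0 : ℂ) 1, deriv f z ≠ 0)
    (hp : AnalyticOn ℂ p (ball 0 1))
    (hp0 : p 0 = 1)
    (hpsq : ∀ z ∈ ball (0 : ℂ) 1, (p z) ^ 2 = deriv f z)
    (hre : ∀ z ∈ ball (0 : ℂ) 1,
      (z * deriv (deriv f) z / deriv f z + 1).re >
        (‖b‖ - 1) / (‖b‖ + 1)) :
    ∀ z ∈ ball (0 : ℂ) 1, (p z).re > 1 / 2 := by
  intro z₁ hz₁
  by_contra hbad
  push_neg at hbad
  -- basic facts about p
  have hpdiff : DifferentiableOn ℂ p (ball 0 1) := hp.differentiableOn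
  have hpat : ∀ z ∈ ball (0:ℂ) 1, DifferentiableAt ℂ p z := fun z hz =>
    (hpdiff z hz).differentiableAt (isOpen_ball.mem_nhds hz)
  have hpne : ∀ z ∈ ball (0:ℂ) 1, p z ≠ 0 := by
    intro z hz h
    exact hf' z hz (by rw [← hpsq z hz, h]; ring)
  have h0mem : (0:ℂ) ∈ ball (0:ℂ) 1 := by simp
  -- derivative relations
  have hddf : ∀ z ∈ ball (0:ℂ) 1, deriv (deriv f) z = 2 * p z * deriv p z := by
    intro z hz
    have hev : deriv f =ᶠ[𝓝 z] (fun y => p y ^ 2) := by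
      filter_upwards [isOpen_ball.mem_nhds hz] with y hy
      exact (hpsq y hy).symm
    rw [hev.deriv_eq]
    have := ((hpat z hz).hasDerivAt.fun_pow 2).deriv
    rw [this]; ring
  have hpb : deriv p 0 = b := by
    have h1 := hddf 0 h0mem
    rw [hfb, hp0] at h1
    have : (2:ℂ) ≠ 0 := two_ne_zero
    field_simp at h1
    exact h1.symm
  -- the function w = 1/p - 1
    
  set w : ℂ → ℂ := fun z => (p z)⁻¹ - 1 with hwdef
  have hw0 : w 0 = 0 := by simp [hwdef, hp0]
  have hwdiff : DifferentiableOn ℂ w (ball 0 1) :=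
    (hpdiff.inv hpne).sub_const 1
  have hwderiv : ∀ z ∈ ball (0:ℂ) 1, HasDerivAt w (-(deriv p z) / (p z)^2) z := by
    intro z hz
    exact (((hpat z hz).hasDerivAt).inv (hpne z hz)).sub_const 1
  have hderivw : ∀ z ∈ ball (0:ℂ) 1, deriv w z = -(deriv p z)/(p z)^2 := fun z hz =>
    (hwderiv z hz).deriv
  have hwb : deriv w 0 = -b := by
    rw [hderivw 0 h0mem, hpb, hp0]; simp
  -- minimal point z₀
  obtain ⟨z₀, hr0pos, hr0le, hre0, hlt, hge⟩ :=
    exists_min_point p hpdiff.continuousOn hp0 z₁ hz₁ hbad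
  set r₀ := ‖z₀‖ with hr₀def
  have hz₁n : ‖z₁‖ < 1 := by simpa using hz₁
  have hr01 : r₀ < 1 := lt_of_le_of_lt hr0le hz₁n
  have hz₀mem : z₀ ∈ ball (0:ℂ) 1 := by simp [mem_ball, dist_zero_right]; exact hr01
  have hcbsub : closedBall (0:ℂ) r₀ ⊆ ball 0 1 := closedBall_subset_ball hr01
  -- |w| ≤ 1 on closedBall r₀
  have habsw : ∀ z ∈ closedBall (0:ℂ) r₀, ‖w z‖ ≤ 1 := by
    intro z hz
    have hzb : z ∈ ball (0:ℂ) 1 := hcbsub hz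
    have hpz : p z ≠ 0 := hpne z hzb
    have hrez : 1/2 ≤ (p z).re := hge z (by simpa [dist_zero_right] using hz)
    have hwz : w z = (1 - p z) / p z := by
      simp only [hwdef]; field_simp
    rw [hwz, norm_div, div_le_one (norm_pos_iff.mpr hpz)]
    have h1 : Complex.normSq (1 - p z) ≤ Complex.normSq (p z) := by
      simp only [Complex.normSq_apply, Complex.sub_re, Complex.sub_im, Complex.one_re,
        Complex.one_im]
      nlinarith
    have := Real.sqrt_le_sqrt h1
    simpa [Complex.norm_def] using this
  -- |w z₀| = 1
  have hnsq₀ : Complex.normSq (w z₀) = 1 := by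
    have hpz : p z₀ ≠ 0 := hpne z₀ hz₀mem
    have hwz : w z₀ = (1 - p z₀) / p z₀ := by
      simp only [hwdef]; field_simp
    rw [hwz, Complex.normSq_div]
    have h1 : Complex.normSq (1 - p z₀) = Complex.normSq (p z₀) := by
      simp only [Complex.normSq_apply, Complex.sub_re, Complex.sub_im, Complex.one_re,
        Complex.one_im]
      nlinarith [hre0]
    rw [h1, div_self]
    exact fun h => hpz (Complex.normSq_eq_zero.mp h)
  have habsw₀ : ‖w z₀‖ = 1 := by
    rw [Complex.norm_def, hnsq₀, Real.sqrt_one]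
  -- dslope bound
  have hwcb : DifferentiableOn ℂ w (closedBall 0 r₀) := hwdiff.mono hcbsub
  have hG : ∀ z ∈ closedBall (0:ℂ) r₀, ‖dslope w 0 z‖ ≤ 1/r₀ := by
    apply dslope_bound hr0pos hwcb hw0
    intro z hz
    exact habsw z (by simp only [mem_closedBall, dist_zero_right]; exact hz.le)
  -- the function g and constant c
  set c : ℂ := (r₀:ℂ) * deriv w 0 with hcdef
  set A := ‖c‖ with hAdef
  have hA : A = r₀ * ‖b‖ := by
    rw [hAdef, hcdef, norm_mul, hwb, norm_neg]
    simp [Complex.norm_real, _root_.abs_of_nonneg hr0pos.le]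
  have hA0 : 0 ≤ A := norm_nonneg c
  have hA1 : A < 1 := by
    rw [hA]
    calc r₀ * ‖b‖ ≤ r₀ * 1 := by
          exact mul_le_mul_of_nonneg_left hb hr0pos.le
    _ = r₀ := mul_one _
    _ < 1 := hr01
  have hAb : A ≤ ‖b‖ := by
    rw [hA]
    calc r₀ * ‖b‖ ≤ 1 * ‖b‖ :=
      mul_le_mul_of_nonneg_right hr01.le (norm_nonneg b)
    _ = _ := one_mul _
  set g : ℂ → ℂ := fun z => (r₀:ℂ) * dslope w 0 z with hgdef
  have hg0 : g 0 = c := by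
    simp only [hgdef, hcdef, dslope_same]
  have hgabs : ∀ z ∈ closedBall (0:ℂ) r₀, ‖g z‖ ≤ 1 := by
    intro z hz
    have := hG z hz
    simp only [hgdef, norm_mul, Complex.norm_real, Real.norm_eq_abs, _root_.abs_of_nonneg hr0pos.le]
    calc r₀ * ‖dslope w 0 z‖ ≤ r₀ * (1/r₀) := by
          apply mul_le_mul_of_nonneg_left _ hr0pos.le
          exact this
    _ = 1 := by field_simp
  have hgdiff : DifferentiableOn ℂ g (closedBall 0 r₀) := by
    apply DifferentiableOn.const_mul
    exact (Complex.differentiableOn_dslope (closedBall_mem_nhds _ hr0pos)).mpr hwcb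
  -- the Möbius transform htil
  have hdenne : ∀ z ∈ closedBall (0:ℂ) r₀, 1 - (starRingEnd ℂ) c * g z ≠ 0 := by
    intro z hz h
    have h1 : ‖(starRingEnd ℂ) c * g z‖ ≤ A := by
      rw [norm_mul, Complex.norm_conj, ← hAdef]
      calc A * ‖g z‖ ≤ A * 1 := mul_le_mul_of_nonneg_left (hgabs z hz) hA0
      _ = A := mul_one _
    have h2 : (starRingEnd ℂ) c * g z = 1 := (sub_eq_zero.mp h).symm
    rw [h2] at h1
    simp at h1
    linarith
  set htil : ℂ → ℂ := fun z => (g z - c) / (1 - (starRingEnd ℂ) c * g z) with htildef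
  have htil0 : htil 0 = 0 := by
    simp [htildef, hg0]
  have htildiff : DifferentiableOn ℂ htil (closedBall 0 r₀) := by
    apply DifferentiableOn.div
    · exact hgdiff.sub_const c
    · exact (differentiableOn_const _).sub (hgdiff.const_mul _)
    · exact hdenne
  have htilabs : ∀ z : ℂ, ‖z‖ = r₀ → ‖htil z‖ ≤ 1 := by
    intro z hz
    have hzcb : z ∈ closedBall (0:ℂ) r₀ := by
      simp only [mem_closedBall, dist_zero_right]; exact hz.le
    simp only [htildef]
    rw [norm_div]
    rw [div_le_one (norm_pos_iff.mpr (hdenne z hzcb))]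
    exact abs_sub_le_abs_one_sub c (g z) hA1.le (hgabs z hzcb)
  have hHtil : ∀ z ∈ closedBall (0:ℂ) r₀, ‖htil z‖ ≤ ‖z‖/r₀ := by
    intro z hz
    rcases eq_or_ne z 0 with rfl | hz0
    · simp [htil0]
    · have h1 := dslope_bound hr0pos htildiff htil0 htilabs z hz
      have h2 : dslope htil 0 z = htil z / z := by
        rw [dslope_of_ne _ hz0, slope_def_field, htil0, sub_zero, sub_zero]
      rw [h2, norm_div] at h1
      have hzpos : 0 < ‖z‖ := norm_pos_iff.mpr hz0
      rw [div_le_div_iff₀ hzpos hr0pos] at h1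
      rw [le_div_iff₀ hr0pos]
      calc ‖htil z‖ * r₀ = ‖htil z‖ * r₀ := rfl
      _ ≤ 1 * ‖z‖ := h1
      _ = ‖z‖ := one_mul _
  -- Schwarz–Pick bound for g
  have hgb : ∀ z ∈ closedBall (0:ℂ) r₀,
      ‖g z‖ ≤ (A + ‖z‖/r₀)/(1 + A*(‖z‖/r₀)) := by
    intro z hz
    have hz' : ‖z‖ ≤ r₀ := by simpa [mem_closedBall, dist_zero_right] using hz
    have ht0 : 0 ≤ ‖z‖/r₀ := div_nonneg (norm_nonneg z) hr0pos.le
    have ht1 : ‖z‖/r₀ ≤ 1 := by rw [div_le_one hr0pos]; exact hz'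
    have hkey : ‖g z - c‖ ≤ (‖z‖/r₀) * ‖1 - (starRingEnd ℂ) c * g z‖ := by
      have hne := hdenne z hz
      have hfac : g z - c = htil z * (1 - (starRingEnd ℂ) c * g z) := by
        simp only [htildef]
        rw [div_mul_cancel₀ _ hne]
      rw [hfac, norm_mul]
      exact mul_le_mul_of_nonneg_right (hHtil z hz) (norm_nonneg _)
    exact mobius_bound c (g z) (‖z‖/r₀) ht0 ht1 hA1 hkey
  -- resulting bound for w
  have hwb2 : ∀ z ∈ closedBall (0:ℂ) r₀,
      ‖w z‖ ≤ (‖z‖/r₀) * ((A + ‖z‖/r₀)/(1 + A*(‖z‖/r₀))) := by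
    intro z hz
    rcases eq_or_ne z 0 with rfl | hz0
    · simp [hw0]
    · have h1 : w z = z * dslope w 0 z := by
        rw [dslope_of_ne _ hz0, slope_def_field, hw0, sub_zero, sub_zero]
        field_simp
      have h2 : ‖dslope w 0 z‖ = ‖g z‖ / r₀ := by
        simp only [hgdef, norm_mul, Complex.norm_real, Real.norm_eq_abs, _root_.abs_of_nonneg hr0pos.le]
        field_simp
      have h3 : ‖z‖ = ‖z‖ := rfl
      rw [h1, norm_mul, h2, h3]
      calc ‖z‖ * (‖g z‖ / r₀) = (‖z‖/r₀) * ‖g z‖ := by ring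
      _ ≤ (‖z‖/r₀) * ((A + ‖z‖/r₀)/(1 + A*(‖z‖/r₀))) :=
        mul_le_mul_of_nonneg_left (hgb z hz) (div_nonneg (norm_nonneg z) hr0pos.le)
  -- the quantity Λ
  set Λ : ℂ := (starRingEnd ℂ) (w z₀) * (deriv w z₀ * z₀) with hΛdef
  have hw_at : HasDerivAt w (deriv w z₀) z₀ := by
    rw [hderivw z₀ hz₀mem]; exact hwderiv z₀ hz₀mem
  -- radial derivative: Λ.re ≥ 2/(1+A)
  have hcomp : 2/(1+A) ≤ Λ.re := by
    have hγ : HasDerivAt (fun ρ : ℝ => ((ρ:ℂ) * z₀)) z₀ 1 := by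
      have h1 : HasDerivAt (fun ρ : ℝ => ((ρ:ℝ):ℂ)) 1 1 :=
        Complex.ofRealCLM.hasFDerivAt.comp_hasDerivAt 1 (hasDerivAt_id 1)
      simpa using h1.mul_const z₀
    have hσγ : HasDerivAt (fun ρ : ℝ => w ((ρ:ℂ) * z₀)) (deriv w z₀ * z₀) 1 := by
      apply hasDerivAt_comp_real hγ
      simpa using hw_at
    have hσ : HasDerivAt (fun ρ : ℝ => Complex.normSq (w ((ρ:ℂ) * z₀))) (2 * Λ.re) 1 := by
      have h1 := hasDerivAt_normSq_comp hσγ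
      simp only [Complex.ofReal_one, one_mul] at h1
      exact h1
    have hΨnum : HasDerivAt (fun ρ : ℝ => ρ * (A + ρ)) (1 * (A + 1) + 1 * 1) 1 := by
      have h := (hasDerivAt_id (1:ℝ)).fun_mul (((hasDerivAt_id (1:ℝ)).const_add A))
      simpa using h
    have hΨden : HasDerivAt (fun ρ : ℝ => 1 + A * ρ) A 1 := by
      simpa using ((hasDerivAt_id (1:ℝ)).const_mul A).const_add 1
    have hdenne1 : (1 + A * 1) ≠ 0 := by nlinarith
    have hΨ0 := hΨnum.fun_div hΨden hdenne1
    have hval : 1 * (A + 1) / (1 + A * 1) = 1 := by field_simp; ring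
    have hΨ : HasDerivAt (fun ρ : ℝ => (ρ * (A + ρ) / (1 + A * ρ))^2) (4/(1+A)) 1 := by
      refine (hΨ0.fun_pow 2).congr_deriv ?_
      rw [hval]
      have h1A : (1:ℝ) + A ≠ 0 := by nlinarith
      field_simp
      ring
    have hF := hΨ.sub hσ
    have hF0 : (fun ρ : ℝ => (ρ * (A + ρ) / (1 + A * ρ))^2
        - Complex.normSq (w ((ρ:ℂ) * z₀))) 1 = 0 := by
      simp only [Complex.ofReal_one, one_mul, mul_one]
      rw [hnsq₀]
      have : (A + 1) / (1 + A) = 1 := by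
        rw [div_eq_one_iff_eq (by nlinarith)]; ring
      rw [this]; norm_num
    have hFnn : ∀ ρ ∈ Set.Ioo (0:ℝ) 1, 0 ≤ (fun ρ : ℝ => (ρ * (A + ρ) / (1 + A * ρ))^2
        - Complex.normSq (w ((ρ:ℂ) * z₀))) ρ := by
      intro ρ hρ
      have hρ0 : 0 ≤ ρ := hρ.1.le
      have hmem : ((ρ:ℂ) * z₀) ∈ closedBall (0:ℂ) r₀ := by
        simp only [mem_closedBall, dist_zero_right, norm_mul, Complex.norm_real,
          Real.norm_eq_abs, _root_.abs_of_nonneg hρ0]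
        calc ρ * ‖z₀‖ ≤ 1 * ‖z₀‖ := mul_le_mul_of_nonneg_right hρ.2.le (norm_nonneg z₀)
        _ = r₀ := one_mul _
      have h1 := hwb2 _ hmem
      have hnz : ‖(ρ:ℂ) * z₀‖ = ρ * r₀ := by
        rw [norm_mul, Complex.norm_real, Real.norm_eq_abs, _root_.abs_of_nonneg hρ0]
      rw [hnz] at h1
      have hrr : ρ * r₀ / r₀ = ρ := by field_simp
      rw [hrr] at h1
      have hb0 : 0 ≤ ρ * ((A + ρ)/(1 + A*ρ)) := by
        apply mul_nonneg hρ0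
        apply div_nonneg (by linarith) (by nlinarith)
      have h2 : Complex.normSq (w ((ρ:ℂ) * z₀)) ≤ (ρ * ((A + ρ)/(1 + A*ρ)))^2 := by
        rw [← Complex.sq_norm]
        exact pow_le_pow_left₀ (norm_nonneg _) h1 2
      have h3 : (ρ * ((A + ρ)/(1 + A*ρ)))^2 = (ρ * (A + ρ) / (1 + A * ρ))^2 := by
        rw [mul_div_assoc]
      simp only []
      rw [← h3]
      linarith
    have hd := deriv_nonpos_of_nonneg_left hF hF0 hFnn
    have h4 : 2 * (2/(1+A)) = 4/(1+A) := by ring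
    linarith
  -- angular derivative : Λ.im = 0
  have hIm : Λ.im = 0 := by
    set γ2 : ℝ → ℂ := fun θ => z₀ * Complex.exp ((θ:ℂ) * Complex.I) with hγ2
    have hγ20 : γ2 0 = z₀ := by simp [hγ2]
    have hγ2d : HasDerivAt γ2 (z₀ * Complex.I) 0 := by
      have h1 : HasDerivAt (fun θ : ℝ => ((θ:ℂ) * Complex.I)) Complex.I 0 := by
        have h0 : HasDerivAt (fun θ : ℝ => ((θ:ℝ):ℂ)) 1 0 :=
          Complex.ofRealCLM.hasFDerivAt.comp_hasDerivAt 0 (hasDerivAt_id 0)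
        simpa using h0.mul_const Complex.I
      have h2 : HasDerivAt Complex.exp 1 (((0:ℝ):ℂ) * Complex.I) := by
        simpa using Complex.hasDerivAt_exp (((0:ℝ):ℂ) * Complex.I)
      have h3 := hasDerivAt_comp_real h1 h2
      have h4 := h3.const_mul z₀
      simp only [one_mul] at h3 h4
      simpa [hγ2, mul_comm] using h4
    have hwγ : HasDerivAt (fun θ => w (γ2 θ)) (deriv w z₀ * (z₀ * Complex.I)) 0 := by
      apply hasDerivAt_comp_real hγ2d
      rw [hγ20]; exact hw_at
    have hτ := hasDerivAt_normSq_comp hwγ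
    simp only [hγ20] at hτ
    have hmax : IsLocalMax (fun θ : ℝ => Complex.normSq (w (γ2 θ))) 0 := by
      apply Filter.Eventually.of_forall
      intro θ
      have hmem : γ2 θ ∈ closedBall (0:ℂ) r₀ := by
        simp only [hγ2, mem_closedBall, dist_zero_right, norm_mul]
        have : ‖Complex.exp ((θ:ℂ) * Complex.I)‖ = 1 := by
          simpa using Complex.norm_exp_ofReal_mul_I θ
        rw [this, mul_one]
      have h1 := habsw _ hmem
      have h2 : Complex.normSq (w (γ2 θ)) ≤ 1 := by
        rw [← Complex.sq_norm]
        nlinarith [norm_nonneg (w (γ2 θ))]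
      show Complex.normSq (w (γ2 θ)) ≤ Complex.normSq (w (γ2 0))
      rw [hγ20, hnsq₀]
      exact h2
    have hzero := hmax.hasDerivAt_eq_zero hτ
    have he : (starRingEnd ℂ) (w z₀) * (deriv w z₀ * (z₀ * Complex.I)) = Λ * Complex.I := by
      rw [hΛdef]; ring
    rw [he] at hzero
    have h5 : (Λ * Complex.I).re = 0 := by linarith [hzero]
    simpa [Complex.mul_re, Complex.I_re, Complex.I_im] using h5.symm
  -- final contradiction at z₀
  have hkey := hre z₀ hz₀mem
  have hfz : deriv f z₀ = p z₀ ^ 2 := (hpsq z₀ hz₀mem).symm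
  have hffz : deriv (deriv f) z₀ = 2 * p z₀ * deriv p z₀ := hddf z₀ hz₀mem
  have hpz : p z₀ ≠ 0 := hpne z₀ hz₀mem
  have hwp : w z₀ * p z₀ = 1 - p z₀ := by
    simp only [hwdef]
    field_simp
  have hcw : (starRingEnd ℂ) (w z₀) * w z₀ = 1 := by
    rw [mul_comm, Complex.mul_conj, hnsq₀]
    simp
  have hΛw : Λ * w z₀ = deriv w z₀ * z₀ := by
    calc Λ * w z₀ = ((starRingEnd ℂ) (w z₀) * w z₀) * (deriv w z₀ * z₀) := by
          rw [hΛdef]; ring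
    _ = deriv w z₀ * z₀ := by rw [hcw, one_mul]
  have hEq : z₀ * deriv (deriv f) z₀ / deriv f z₀ + 1 = 1 - 2 * Λ * (1 - p z₀) := by
    rw [hffz, hfz]
    have hdw : deriv w z₀ = -(deriv p z₀)/(p z₀)^2 := hderivw z₀ hz₀mem
    have e1 : z₀ * (2 * p z₀ * deriv p z₀) / (p z₀^2) = -2 * (deriv w z₀ * z₀) * p z₀ := by
      rw [hdw]
      field_simp
    have e2 : -2 * (deriv w z₀ * z₀) * p z₀ = -2 * Λ * (1 - p z₀) := by
      rw [← hΛw, ← hwp]; ring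
    rw [e1, e2]; ring
  have hΛreal : Λ = ((Λ.re : ℝ) : ℂ) := by
    apply Complex.ext
    · simp
    · simp [hIm]
  have hreeq : ((1:ℂ) - 2 * Λ * (1 - p z₀)).re = 1 - Λ.re := by
    have hp₀re : (p z₀).re = 1/2 := hre0
    rw [hΛreal]
    simp only [Complex.sub_re, Complex.one_re, Complex.mul_re, Complex.mul_im,
      Complex.sub_im, Complex.one_im, Complex.ofReal_re, Complex.ofReal_im]
    norm_num [hp₀re]
    ring
  rw [hEq, hreeq] at hkey
  have hchain : 1 - Λ.re ≤ (‖b‖ - 1)/(‖b‖ + 1) := by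
    have hBpos : 0 < ‖b‖ + 1 := by positivity
    have hApos : 0 < 1 + A := by linarith
    have h2 : 1 - 2/(1+A) ≤ (‖b‖ - 1)/(‖b‖ + 1) := by
      have e : 1 - 2/(1+A) = (A-1)/(A+1) := by
        field_simp
        ring
      rw [e, div_le_div_iff₀ (by linarith) hBpos]
      nlinarith [hAb, norm_nonneg b]
    linarith
  linarith
end

section
/- If f is analytic on the unit disk D with f(z) = z + b z^2 + ..., |b| ≤ 1, f(z) ≠ 0 for z ≠ 0, and Re(z f'(z)/f(z)) > |b|/(|b|+1) for all z in D, then Re(f(z)/z) > 1/2 for all z in D. -/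
open Complex Metric



lemma aux_hasDerivAt_normSq_comp {u : ℝ → ℂ} {u' : ℂ} {t : ℝ} (hu : HasDerivAt u u' t) :
    HasDerivAt (fun s => Complex.normSq (u s))
      (2 * ((u t).re * u'.re + (u t).im * u'.im)) t := by
  have hre : HasDerivAt (fun s => (u s).re) u'.re t :=
    Complex.reCLM.hasFDerivAt.comp_hasDerivAt t hu
  have him : HasDerivAt (fun s => (u s).im) u'.im t :=
    Complex.imCLM.hasFDerivAt.comp_hasDerivAt t hu
  have h := (hre.fun_mul hre).add (him.fun_mul him)
  exact h.congr_deriv (by ring)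

lemma aux_deriv_nonpos {φ : ℝ → ℝ} {d : ℝ} (hd : HasDerivAt φ d 1)
    (h1 : φ 1 = 0) (hnn : ∀ t, 0 ≤ t → t < 1 → 0 ≤ φ t) : d ≤ 0 := by
  have hs := hasDerivAt_iff_tendsto_slope.mp hd
  have hs' : Filter.Tendsto (slope φ 1) (nhdsWithin 1 (Set.Iio 1)) (nhds d) :=
    hs.mono_left (nhdsWithin_mono 1 (fun x hx => ne_of_lt hx))
  refine le_of_tendsto hs' ?_
  filter_upwards [Ioo_mem_nhdsLT_of_mem (show (1:ℝ) ∈ Set.Ioc 0 1 by constructor <;> norm_num)]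
    with t ht
  have h2 : 0 ≤ φ t := hnn t ht.1.le ht.2
  have h3 : t - 1 < 0 := by linarith [ht.2]
  rw [slope_def_field, h1]
  exact div_nonpos_of_nonneg_of_nonpos (by linarith) h3.le

lemma aux_le_of_forall_eps {a B : ℝ} (hB : 0 ≤ B) (h : ∀ ε : ℝ, 0 < ε → a ≤ (1 + ε) * B) :
    a ≤ B := by
  by_contra hc
  push_neg at hc
  set ε := (a - B) / (2 * (B + 1)) with hε_def
  have hεpos : 0 < ε := div_pos (by linarith) (by linarith)
  have h1 := h ε hεpos
  have hε : ε * (2 * (B + 1)) = a - B := div_mul_cancel₀ _ (by positivity)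
  nlinarith [mul_nonneg hεpos.le hB]

lemma aux_moebius (R : ℝ) (c x : ℂ) :
    Complex.normSq ((R:ℂ)^2 - (starRingEnd ℂ) c * x) - R^2 * Complex.normSq (x - c)
      = (R^2 - Complex.normSq x) * (R^2 - Complex.normSq c) := by
  simp only [Complex.normSq_apply, Complex.sub_re, Complex.sub_im, Complex.mul_re, Complex.mul_im,
    Complex.conj_re, Complex.conj_im, pow_two, Complex.ofReal_re, Complex.ofReal_im,
    Complex.mul_re, Complex.mul_im]
  ring

-- Schwarz-Pick style bound for the Möbius transform of h on the ball of radius r₀.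
lemma aux_schwarz {h : ℂ → ℂ} {c : ℂ} {r₀ R : ℝ}
    (hr₀ : 0 < r₀) (hR : R = 1/r₀) (hR1 : 1 < R)
    (hhd : DifferentiableOn ℂ h (closedBall 0 r₀))
    (hc : h 0 = c) (hcle : ‖c‖ ≤ 1)
    (hbd : ∀ z ∈ closedBall (0:ℂ) r₀, ‖h z‖ ≤ R) :
    ∀ z ∈ ball (0:ℂ) r₀,
      R^2 * Complex.normSq (h z - c)
        ≤ (‖z‖/r₀)^2 * Complex.normSq ((R:ℂ)^2 - (starRingEnd ℂ) c * h z) := by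
  have hns : ∀ x : ℂ, Complex.normSq x = ‖x‖^2 := fun x => by
    rw [Complex.normSq_eq_norm_sq]
  have hden : ∀ z ∈ closedBall (0:ℂ) r₀, ((R:ℂ)^2 - (starRingEnd ℂ) c * h z) ≠ 0 := by
    intro z hz heq
    have h1 : ‖(starRingEnd ℂ) c * h z‖ ≤ 1 * R := by
      rw [norm_mul, RCLike.norm_conj]
      exact mul_le_mul hcle (hbd z hz) (norm_nonneg _) zero_le_one
    have h2 : ((R:ℂ)^2) = (starRingEnd ℂ) c * h z := by linear_combination heq
    have h3 : ‖((R:ℂ)^2)‖ = R^2 := by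
      rw [← Complex.ofReal_pow, Complex.norm_real]
      exact abs_of_nonneg (by positivity)
    rw [← h2] at h1
    rw [h3] at h1
    nlinarith
  set G : ℂ → ℂ := fun z => (R:ℂ) * (h z - c) / ((R:ℂ)^2 - (starRingEnd ℂ) c * h z) with hG_def
  have hG0 : G 0 = 0 := by simp [hG_def, hc]
  have hGd : DifferentiableOn ℂ G (ball 0 r₀) := by
    apply DifferentiableOn.div
    · exact (differentiableOn_const _).mul
        (((hhd.mono ball_subset_closedBall)).sub (differentiableOn_const _))
    · exact (differentiableOn_const _).sub
        ((differentiableOn_const _).mul (hhd.mono ball_subset_closedBall))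
    · exact fun z hz => hden z (ball_subset_closedBall hz)
  have hG1 : ∀ z ∈ closedBall (0:ℂ) r₀, ‖G z‖ ≤ 1 := by
    intro z hz
    have hdz := hden z hz
    rw [hG_def]
    simp only
    rw [norm_div, div_le_one (norm_pos_iff.mpr hdz)]
    have hsq : Complex.normSq ((R:ℂ) * (h z - c)) ≤ Complex.normSq ((R:ℂ)^2 - (starRingEnd ℂ) c * h z) := by
      have hmm := aux_moebius R c (h z)
      have h1 : Complex.normSq (h z) ≤ R^2 := by
        rw [hns]; nlinarith [hbd z hz, norm_nonneg (h z)]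
      have h2 : Complex.normSq c ≤ R^2 := by
        rw [hns]; nlinarith [norm_nonneg c]
      have h3 : Complex.normSq ((R:ℂ) * (h z - c)) = R^2 * Complex.normSq (h z - c) := by
        rw [map_mul, Complex.normSq_ofReal]; ring
      rw [h3]
      nlinarith [Complex.normSq_nonneg (h z - c), Complex.normSq_nonneg c]
    rw [hns, hns] at hsq
    nlinarith [norm_nonneg ((R:ℂ) * (h z - c)), norm_nonneg ((R:ℂ)^2 - (starRingEnd ℂ) c * h z)]
  intro z hz
  have hSch : ‖G z‖ ≤ ‖z‖ / r₀ := by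
    apply aux_le_of_forall_eps (by positivity)
    intro ε hε
    have hmap : Set.MapsTo G (ball 0 r₀) (closedBall (G 0) (1 + ε)) := by
      intro y hy
      rw [hG0, mem_closedBall_zero_iff]
      exact (lt_of_le_of_lt (hG1 y (ball_subset_closedBall hy)) (by linarith)).le
    have := Complex.dist_le_div_mul_dist_of_mapsTo_ball hGd hmap hz
    rw [hG0, dist_zero_right, dist_zero_right] at this
    calc ‖G z‖ ≤ (1+ε)/r₀ * ‖z‖ := this
    _ = (1+ε) * (‖z‖/r₀) := by ring
  have hGz : Complex.normSq (G z) ≤ (‖z‖/r₀)^2 := by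
    rw [hns]
    have h0 : (0:ℝ) ≤ ‖z‖/r₀ := by positivity
    nlinarith [norm_nonneg (G z)]
  have hdz := hden z (ball_subset_closedBall hz)
  rw [hG_def] at hGz
  simp only at hGz
  rw [map_div₀, map_mul] at hGz
  rw [div_le_iff₀ (Complex.normSq_pos.mpr hdz)] at hGz
  calc R^2 * Complex.normSq (h z - c)
      = Complex.normSq ((R:ℂ)) * Complex.normSq (h z - c) := by
        rw [Complex.normSq_ofReal]; ring
    _ ≤ (‖z‖/r₀)^2 * Complex.normSq ((R:ℂ)^2 - (starRingEnd ℂ) c * h z) := hGz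

lemma aux_rearrange (R : ℝ) (c ω q : ℂ) :
    (((R:ℂ)^2 - (starRingEnd ℂ) c * ω).re * ((starRingEnd ℂ) c * q).re
      + ((R:ℂ)^2 - (starRingEnd ℂ) c * ω).im * ((starRingEnd ℂ) c * q).im)
      + R^2 * ((ω - c).re * q.re + (ω - c).im * q.im)
      = ((starRingEnd ℂ) ω * q).re * (R^2 - Complex.normSq c) := by
  simp only [Complex.normSq_apply, Complex.sub_re, Complex.sub_im, Complex.mul_re, Complex.mul_im,
    Complex.conj_re, Complex.conj_im, pow_two, Complex.ofReal_re, Complex.ofReal_im]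
  ring

lemma aux_julia {h : ℂ → ℂ} {z₀ c : ℂ} {r₀ R : ℝ}
    (hr₀ : 0 < r₀) (hr₁ : r₀ < 1) (hR : R = 1/r₀) (hR1 : 1 < R)
    (hhd : DifferentiableOn ℂ h (ball 0 1))
    (hz₀n : ‖z₀‖ = r₀)
    (hc : h 0 = c) (hcle : ‖c‖ ≤ 1)
    (hbd : ∀ z ∈ closedBall (0:ℂ) r₀, ‖h z‖ ≤ R)
    (hω : ‖h z₀‖ = R) :
    R^2 * Complex.normSq (h z₀ - c)
      ≤ ((starRingEnd ℂ) (h z₀) * (z₀ * deriv h z₀)).re * (R^2 - Complex.normSq c) := by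
  have hns : ∀ x : ℂ, Complex.normSq x = ‖x‖^2 := fun x => by
    rw [Complex.normSq_eq_norm_sq]
  have hz₀ball : z₀ ∈ ball (0:ℂ) 1 := mem_ball_zero_iff.mpr (by rw [hz₀n]; exact hr₁)
  set D : ℂ := deriv h z₀ with hD_def
  have hD : HasDerivAt h D z₀ :=
    (hhd.differentiableAt (isOpen_ball.mem_nhds hz₀ball)).hasDerivAt
  -- derivative of the radial curve
  have hm : HasDerivAt (fun ζ : ℂ => h (ζ * z₀)) (D * z₀) 1 := by
    have hi : HasDerivAt (fun ζ : ℂ => ζ * z₀) (1 * z₀) 1 := (hasDerivAt_id (1:ℂ)).mul_const z₀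
    have hD' : HasDerivAt h D ((1:ℂ) * z₀) := by rwa [one_mul]
    have := HasDerivAt.comp (1:ℂ) hD' hi
    simpa [Function.comp_def] using this
  have hu : HasDerivAt (fun t : ℝ => h ((t:ℝ) * z₀ : ℂ)) (D * z₀) 1 := hm.comp_ofReal
  have hv : HasDerivAt (fun t : ℝ => (R:ℂ)^2 - (starRingEnd ℂ) c * h ((t:ℝ) * z₀ : ℂ))
      (-((starRingEnd ℂ) c * (D * z₀))) 1 := (hu.const_mul ((starRingEnd ℂ) c)).const_sub _
  have hy : HasDerivAt (fun t : ℝ => h ((t:ℝ) * z₀ : ℂ) - c) (D * z₀) 1 := hu.sub_const c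
  set ω : ℂ := h z₀ with hω_def
  have h1z : (((1:ℝ) : ℂ) * z₀) = z₀ := by rw [Complex.ofReal_one, one_mul]
  set φ : ℝ → ℝ := fun t =>
    t^2 * Complex.normSq ((R:ℂ)^2 - (starRingEnd ℂ) c * h ((t:ℝ) * z₀ : ℂ))
      - R^2 * Complex.normSq (h ((t:ℝ) * z₀ : ℂ) - c) with hφ_def
  have hnv := aux_hasDerivAt_normSq_comp hv
  have hny := aux_hasDerivAt_normSq_comp hy
  have hφd := ((hasDerivAt_pow 2 (1:ℝ)).mul hnv).sub (hny.const_mul (R^2))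
  rw [h1z] at hnv hny hφd
  -- φ 1 = 0
  have hnsω : Complex.normSq ω = R^2 := by rw [hns, hω]
  have hφ1 : φ 1 = 0 := by
    have := aux_moebius R c ω
    rw [hnsω] at this
    simp only [hφ_def, h1z, one_pow]
    rw [← hω_def]
    simp at this ⊢
    linarith [this]
  have hnn : ∀ t, 0 ≤ t → t < 1 → 0 ≤ φ t := by
    intro t ht0 ht1
    have hz : ((t:ℝ) * z₀ : ℂ) ∈ ball (0:ℂ) r₀ := by
      rw [mem_ball_zero_iff, norm_mul, Complex.norm_real, Real.norm_eq_abs, _root_.abs_of_nonneg ht0, hz₀n]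
      nlinarith
    have hS := aux_schwarz hr₀ hR hR1 (hhd.mono (closedBall_subset_ball hr₁)) hc hcle hbd _ hz
    have hnorm : ‖((t:ℝ) * z₀ : ℂ)‖ / r₀ = t := by
      rw [norm_mul, Complex.norm_real, Real.norm_eq_abs, _root_.abs_of_nonneg ht0, hz₀n]
      field_simp
    rw [hnorm] at hS
    simp only [hφ_def]
    linarith
  have hd0 := aux_deriv_nonpos hφd hφ1 hnn
  -- rearrange
  have hrr := aux_rearrange R c ω (D * z₀)
  have hmoeb := aux_moebius R c ω
  rw [hnsω] at hmoeb
  have hq : z₀ * deriv h z₀ = D * z₀ := by rw [← hD_def, mul_comm]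
  rw [hq]
  simp only [Complex.neg_re, Complex.neg_im, one_pow, Nat.cast_ofNat, mul_one] at hd0
  nlinarith [hd0, hrr, hmoeb]

set_option maxHeartbeats 2000000 in
/-- If `f(z) = z + b z² + ⋯` is analytic on the unit disk, `|b| ≤ 1`,
`f(z) ≠ 0` for `z ≠ 0`, and `Re(z f'(z)/f(z)) > |b|/(|b|+1)` on the disk,
then `Re(f(z)/z) > 1/2` on the disk. -/
theorem stmt_2 (f : ℂ → ℂ) (b : ℂ)
    (hf : AnalyticOn ℂ f (ball 0 1))
    (hf0 : f 0 = 0) (hf1 : deriv f 0 = 1)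
    (hfb : deriv (deriv f) 0 = 2 * b)
    (hb : ‖b‖ ≤ 1)
    (hfz : ∀ z ∈ ball (0 : ℂ) 1, z ≠ 0 → f z ≠ 0)
    (hre : ∀ z ∈ ball (0 : ℂ) 1, z ≠ 0 →
      (z * deriv f z / f z).re > ‖b‖ / (‖b‖ + 1)) :
    ∀ z ∈ ball (0 : ℂ) 1, z ≠ 0 → (f z / z).re > 1 / 2 := by
  have hball : (0:ℂ) ∈ ball (0:ℂ) 1 := by simp
  have hfd : DifferentiableOn ℂ f (ball 0 1) := hf.differentiableOn
  have hns : ∀ x : ℂ, Complex.normSq x = ‖x‖^2 := fun x => by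
    rw [Complex.normSq_eq_norm_sq]
  set β : ℝ := ‖b‖ with hβ_def
  have hβ0 : 0 ≤ β := norm_nonneg b
  -- the function p = f z / z
  set p : ℂ → ℂ := dslope f 0 with hp_def
  have hpd : DifferentiableOn ℂ p (ball 0 1) :=
    (differentiableOn_dslope (isOpen_ball.mem_nhds hball)).mpr hfd
  have hfzp : ∀ z : ℂ, f z = z * p z := by
    intro z
    have h1 := sub_smul_dslope f 0 z
    rw [sub_zero, hf0, sub_zero, smul_eq_mul] at h1
    exact h1.symm
  have hp0 : p 0 = 1 := by rw [hp_def, dslope_same, hf1]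
  have hpan : AnalyticOnNhd ℂ p (ball 0 1) := hpd.analyticOnNhd isOpen_ball
  have hderiv_f : ∀ z ∈ ball (0:ℂ) 1, deriv f z = p z + z * deriv p z := by
    intro z hz
    have he : f =ᶠ[nhds z] (fun y => y * p y) := by
      filter_upwards [isOpen_ball.mem_nhds hz] with y _
      exact hfzp y
    have h1 : DifferentiableAt ℂ p z := hpd.differentiableAt (isOpen_ball.mem_nhds hz)
    rw [he.deriv_eq, deriv_fun_mul differentiableAt_fun_id h1]
    simp
  have hdp0 : deriv p 0 = b := by
    have he : deriv f =ᶠ[nhds 0] (fun z => p z + z * deriv p z) := by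
      filter_upwards [isOpen_ball.mem_nhds hball] with y hy
      exact hderiv_f y hy
    have h2 : deriv (deriv f) 0 = deriv (fun z => p z + z * deriv p z) 0 := he.deriv_eq
    have hdp : DifferentiableAt ℂ (deriv p) 0 := (hpan.deriv 0 hball).differentiableAt
    have hp' : DifferentiableAt ℂ p 0 := hpd.differentiableAt (isOpen_ball.mem_nhds hball)
    rw [hfb, deriv_fun_add hp' (differentiableAt_fun_id.fun_mul hdp),
      deriv_fun_mul differentiableAt_fun_id hdp] at h2
    simp at h2
    linear_combination -h2 / 2
  have hpne : ∀ z ∈ ball (0:ℂ) 1, p z ≠ 0 := by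
    intro z hz
    rcases eq_or_ne z 0 with rfl | hzz
    · rw [hp0]; exact one_ne_zero
    · intro h0
      exact hfz z hz hzz (by rw [hfzp z, h0, mul_zero])
  -- the function w with |w| < 1 ↔ Re p > 1/2
  set w : ℂ → ℂ := fun z => (p z)⁻¹ - 1 with hw_def
  have hwd : DifferentiableOn ℂ w (ball 0 1) :=
    (hpd.inv hpne).sub (differentiableOn_const 1)
  have hw0 : w 0 = 0 := by rw [hw_def]; simp [hp0]
  have hdw : ∀ z ∈ ball (0:ℂ) 1, deriv w z = -deriv p z / (p z)^2 := by
    intro z hz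
    have h1 : DifferentiableAt ℂ p z := hpd.differentiableAt (isOpen_ball.mem_nhds hz)
    rw [hw_def]
    rw [deriv_sub_const, deriv_fun_inv'' h1 (hpne z hz)]
  have hdw0 : deriv w 0 = -b := by rw [hdw 0 hball, hdp0, hp0]; norm_num
  -- main claim : |w| < 1 on the ball
  have key : ∀ z ∈ ball (0:ℂ) 1, ‖w z‖ < 1 := by
    by_contra hcon
    push_neg at hcon
    obtain ⟨z₁, hz₁, hz₁w⟩ := hcon
    have hz₁1 : ‖z₁‖ < 1 := mem_ball_zero_iff.mp hz₁
    have hsub1 : closedBall (0:ℂ) ‖z₁‖ ⊆ ball 0 1 := closedBall_subset_ball hz₁1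
    have hwc : ContinuousOn w (closedBall 0 ‖z₁‖) := (hwd.mono hsub1).continuousOn
    set K : Set ℂ := closedBall 0 ‖z₁‖ ∩ (w ⁻¹' {u : ℂ | 1 ≤ ‖u‖}) with hK_def
    have hKc : IsClosed K :=
      hwc.preimage_isClosed_of_isClosed Metric.isClosed_closedBall
        (isClosed_le continuous_const continuous_norm)
    have hKcomp : IsCompact K :=
      (isCompact_closedBall (0:ℂ) ‖z₁‖).of_isClosed_subset hKc Set.inter_subset_left
    have hKne : K.Nonempty := ⟨z₁, ⟨mem_closedBall_zero_iff.mpr le_rfl, hz₁w⟩⟩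
    obtain ⟨z₀, hz₀K, hz₀min⟩ := hKcomp.exists_isMinOn hKne continuous_norm.continuousOn
    set r₀ : ℝ := ‖z₀‖ with hr₀_def
    have hz₀cb : r₀ ≤ ‖z₁‖ := mem_closedBall_zero_iff.mp hz₀K.1
    have hwz₀ : 1 ≤ ‖w z₀‖ := hz₀K.2
    have hr₀lt1 : r₀ < 1 := lt_of_le_of_lt hz₀cb hz₁1
    have hz₀ball : z₀ ∈ ball (0:ℂ) 1 := mem_ball_zero_iff.mpr hr₀lt1
    have hr₀pos : 0 < r₀ := by
      rcases eq_or_lt_of_le (norm_nonneg z₀) with hq | hq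
      · exfalso
        have hz0 : z₀ = 0 := norm_eq_zero.mp hq.symm
        rw [hz0, hw0, norm_zero] at hwz₀
        linarith
      · exact hq
    have hz₀ne : z₀ ≠ 0 := norm_pos_iff.mp hr₀pos
    have hlt : ∀ z : ℂ, ‖z‖ < r₀ → ‖w z‖ < 1 := by
      intro z hzr
      by_contra hcontra
      push_neg at hcontra
      have hzK : z ∈ K := ⟨mem_closedBall_zero_iff.mpr (le_trans hzr.le hz₀cb), hcontra⟩
      have := isMinOn_iff.mp hz₀min z hzK
      linarith [hzr]
    have hle : ∀ z : ℂ, ‖z‖ ≤ r₀ → ‖w z‖ ≤ 1 := by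
      intro z hzr
      rcases lt_or_eq_of_le hzr with hq | hq
      · exact (hlt z hq).le
      · have hzb : z ∈ ball (0:ℂ) 1 := mem_ball_zero_iff.mpr (by rw [hq]; exact hr₀lt1)
        have hcont : ContinuousAt w z :=
          (hwd.differentiableAt (isOpen_ball.mem_nhds hzb)).continuousAt
        have h1 : Filter.Tendsto (fun t : ℝ => ((t:ℂ) * z))
            (nhdsWithin 1 (Set.Iio 1)) (nhds z) := by
          have hcont2 : Continuous (fun t : ℝ => ((t:ℂ) * z)) :=
            (Complex.continuous_ofReal.mul continuous_const)
          have h2 := hcont2.tendsto 1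
          rw [Complex.ofReal_one, one_mul] at h2
          exact h2.mono_left nhdsWithin_le_nhds
        have ht : Filter.Tendsto (fun t : ℝ => w ((t:ℂ) * z))
            (nhdsWithin 1 (Set.Iio 1)) (nhds (w z)) := hcont.tendsto.comp h1
        refine le_of_tendsto ht.norm ?_
        filter_upwards [Ioo_mem_nhdsLT_of_mem
          (show (1:ℝ) ∈ Set.Ioc 0 1 by constructor <;> norm_num)] with t htt
        have hn : ‖(t:ℂ) * z‖ < r₀ := by
          rw [norm_mul, Complex.norm_real, Real.norm_eq_abs, _root_.abs_of_nonneg htt.1.le, hq]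
          nlinarith [htt.2, hr₀pos, htt.1]
        exact (hlt _ hn).le
    have hwz₀1 : ‖w z₀‖ = 1 := le_antisymm (hle z₀ le_rfl) hwz₀
    -- h = w z / z
    set h : ℂ → ℂ := dslope w 0 with hh_def
    have hhd : DifferentiableOn ℂ h (ball 0 1) :=
      (differentiableOn_dslope (isOpen_ball.mem_nhds hball)).mpr hwd
    have hwh : ∀ z : ℂ, w z = z * h z := by
      intro z
      have h1 := sub_smul_dslope w 0 z
      rw [sub_zero, hw0, sub_zero, smul_eq_mul] at h1
      exact h1.symm
    have hh0 : h 0 = -b := by rw [hh_def, dslope_same, hdw0]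
    set R : ℝ := 1 / r₀ with hR_def
    have hR1 : 1 < R := by rw [hR_def, lt_div_iff₀ hr₀pos]; linarith
    have hsub2 : closedBall (0:ℂ) r₀ ⊆ ball 0 1 := closedBall_subset_ball hr₀lt1
    have hbd : ∀ z ∈ closedBall (0:ℂ) r₀, ‖h z‖ ≤ R := by
      have hdc : DiffContOnCl ℂ h (ball 0 r₀) := DifferentiableOn.diffContOnCl (by
        rw [closure_ball (0:ℂ) hr₀pos.ne']
        exact hhd.mono hsub2)
      intro z hz
      refine Complex.norm_le_of_forall_mem_frontier_norm_le isBounded_ball hdc ?_ ?_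
      · rw [frontier_ball (0:ℂ) hr₀pos.ne']
        intro ζ hζ
        have hζr : ‖ζ‖ = r₀ := mem_sphere_zero_iff_norm.mp hζ
        have hwζ : ‖w ζ‖ ≤ 1 := hle ζ (le_of_eq hζr)
        rw [hwh ζ, norm_mul, hζr] at hwζ
        rw [hR_def, le_div_iff₀ hr₀pos, mul_comm]
        linarith
      · rw [closure_ball (0:ℂ) hr₀pos.ne']; exact hz
    have hωn : ‖h z₀‖ = R := by
      have h1 : (1:ℝ) = r₀ * ‖h z₀‖ := by
        rw [← hwz₀1, hwh z₀, norm_mul, ← hr₀_def]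
      rw [hR_def, eq_div_iff hr₀pos.ne']
      linear_combination -h1
    have hcle : ‖(-b:ℂ)‖ ≤ 1 := by rw [norm_neg]; exact hb
    have hjulia := aux_julia hr₀pos hr₀lt1 hR_def hR1 hhd hr₀_def.symm hh0 hcle hbd hωn
    -- derivative of w at z₀ via h
    have hw_eq : w = fun z => z * h z := funext hwh
    have hDh : DifferentiableAt ℂ h z₀ := hhd.differentiableAt (isOpen_ball.mem_nhds hz₀ball)
    have hdwz₀ : deriv w z₀ = h z₀ + z₀ * deriv h z₀ := by
      rw [hw_eq, deriv_fun_mul differentiableAt_fun_id hDh]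
      simp
    -- basic conjugation identities
    have hzz : (starRingEnd ℂ) z₀ * z₀ = ((r₀^2 : ℝ) : ℂ) := by
      rw [mul_comm, Complex.mul_conj]
      congr 1
      rw [hns, hr₀_def]
    have hωω : h z₀ * (starRingEnd ℂ) (h z₀) = ((R^2 : ℝ) : ℂ) := by
      rw [Complex.mul_conj]
      congr 1
      rw [hns, hωn]
    -- Im((conj ω) * q) = 0 via the angular max
    have himq : ((starRingEnd ℂ) (h z₀) * (z₀ * deriv h z₀)).im = 0 := by
      have hγc : HasDerivAt (fun ζ : ℂ => w (Complex.exp (ζ * I) * z₀))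
          (deriv w z₀ * (I * z₀)) 0 := by
        have h1 : HasDerivAt (fun ζ : ℂ => ζ * I) ((1:ℂ) * I) 0 :=
          (hasDerivAt_id (0:ℂ)).mul_const I
        have h2 : HasDerivAt Complex.exp (Complex.exp ((0:ℂ) * I)) ((0:ℂ) * I) :=
          Complex.hasDerivAt_exp _
        have h3 := HasDerivAt.comp (0:ℂ) h2 h1
        have h4 := h3.mul_const z₀
        have h5 : HasDerivAt w (deriv w z₀) (Complex.exp ((0:ℂ) * I) * z₀) := by
          rw [zero_mul, Complex.exp_zero, one_mul]
          exact (hwd.differentiableAt (isOpen_ball.mem_nhds hz₀ball)).hasDerivAt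
        have h6 := HasDerivAt.comp (0:ℂ) h5 h4
        have h7 : deriv w z₀ * (Complex.exp ((0:ℂ) * I) * (1 * I) * z₀)
            = deriv w z₀ * (I * z₀) := by
          rw [zero_mul, Complex.exp_zero]; ring
        rw [Function.comp_def, Function.comp_def] at h6
        rw [← h7]
        exact h6
      have hγ : HasDerivAt (fun θ : ℝ => w (Complex.exp ((θ:ℂ) * I) * z₀))
          (deriv w z₀ * (I * z₀)) 0 := by
        have := hγc.comp_ofReal (z := (0:ℝ))
        simpa using this
      have hψd := aux_hasDerivAt_normSq_comp hγ
      have h0z : Complex.exp (((0:ℝ):ℂ) * I) * z₀ = z₀ := by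
        rw [Complex.ofReal_zero, zero_mul, Complex.exp_zero, one_mul]
      rw [h0z] at hψd
      have hmax : IsLocalMax (fun θ : ℝ => Complex.normSq (w (Complex.exp ((θ:ℂ) * I) * z₀))) 0 := by
        apply Filter.Eventually.of_forall
        intro θ
        have hnn : ‖Complex.exp ((θ:ℂ) * I) * z₀‖ ≤ r₀ := by
          rw [norm_mul, Complex.norm_exp]
          have : (((θ:ℂ)) * I).re = 0 := by simp
          rw [this, Real.exp_zero, one_mul, ← hr₀_def]
        have h1 := hle _ hnn
        simp only [h0z]
        rw [hns, hns, hwz₀1, one_pow]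
        exact pow_le_one₀ (norm_nonneg _) h1
      have hval := hmax.hasDerivAt_eq_zero hψd
      -- translate into the Im statement
      set e' : ℂ := deriv w z₀ * (I * z₀) with he'_def
      have hX : (starRingEnd ℂ) (w z₀) * e' =
          Complex.I * (((r₀^2 : ℝ)):ℂ) * (((R^2 : ℝ):ℂ) + (starRingEnd ℂ) (h z₀) * (z₀ * deriv h z₀)) := by
        rw [he'_def, hdwz₀, hwh z₀, map_mul]
        linear_combination (Complex.I * ((starRingEnd ℂ) (h z₀) * h z₀ +
            (starRingEnd ℂ) (h z₀) * (z₀ * deriv h z₀))) * hzz +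
          Complex.I * (((r₀^2 : ℝ)):ℂ) * hωω
      have hXre : ((starRingEnd ℂ) (w z₀) * e').re
          = -(r₀^2) * ((starRingEnd ℂ) (h z₀) * (z₀ * deriv h z₀)).im := by
        rw [hX]
        simp only [Complex.mul_re, Complex.mul_im, Complex.add_re, Complex.add_im,
          Complex.I_re, Complex.I_im, Complex.ofReal_re, Complex.ofReal_im,
          Complex.conj_re, Complex.conj_im]
        ring
      have hval' : (w z₀).re * e'.re + (w z₀).im * e'.im = 0 := by linarith [hval]
      have hre2 : ((starRingEnd ℂ) (w z₀) * e').re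
          = (w z₀).re * e'.re + (w z₀).im * e'.im := by
        simp only [Complex.mul_re, Complex.conj_re, Complex.conj_im]
        ring
      have h9 : -(r₀^2) * ((starRingEnd ℂ) (h z₀) * (z₀ * deriv h z₀)).im = 0 := by
        rw [← hXre, hre2]
        exact hval'
      rcases mul_eq_zero.mp h9 with h9' | h9'
      · exfalso
        nlinarith [hr₀pos]
      · exact h9'
    -- the quantity lam = z₀ w'(z₀) conj(w(z₀))
    set lam : ℂ := z₀ * deriv w z₀ * (starRingEnd ℂ) (w z₀) with hlam_def
    have hlam1 : lam = ((r₀^2 : ℝ):ℂ) * ((R^2 : ℝ):ℂ)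
        + ((r₀^2 : ℝ):ℂ) * ((starRingEnd ℂ) (h z₀) * (z₀ * deriv h z₀)) := by
      rw [hlam_def, hdwz₀, hwh z₀, map_mul]
      linear_combination ((starRingEnd ℂ) (h z₀) * h z₀ +
          (starRingEnd ℂ) (h z₀) * (z₀ * deriv h z₀)) * hzz + ((r₀^2 : ℝ):ℂ) * hωω
    have hlam_re : lam.re = r₀^2 * R^2
        + r₀^2 * ((starRingEnd ℂ) (h z₀) * (z₀ * deriv h z₀)).re := by
      rw [hlam1]
      simp only [Complex.add_re, Complex.mul_re, Complex.mul_im, Complex.ofReal_re,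
        Complex.ofReal_im, Complex.conj_re, Complex.conj_im]
      ring
    have hlam_im : lam.im = 0 := by
      have h1 : lam.im = r₀^2 * R^2 * 0 + r₀^2 * ((starRingEnd ℂ) (h z₀) * (z₀ * deriv h z₀)).im := by
        rw [hlam1]
        simp only [Complex.add_im, Complex.mul_re, Complex.mul_im, Complex.ofReal_re,
          Complex.ofReal_im, Complex.conj_re, Complex.conj_im]
        ring
      rw [h1, himq]
      ring
    set T : ℝ := ((starRingEnd ℂ) (h z₀) * (z₀ * deriv h z₀)).re with hT_def
    have hr₀R : r₀^2 * R^2 = 1 := by rw [hR_def]; field_simp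
    -- lower bound for lam.re
    have hnormb : Complex.normSq (-b : ℂ) = β^2 := by
      rw [hns, norm_neg, hβ_def]
    have hωmb : (R - β)^2 ≤ Complex.normSq (h z₀ - (-b)) := by
      have h1 : R - β ≤ ‖h z₀ - (-b)‖ := by
        have := norm_sub_norm_le (h z₀) (-b : ℂ)
        rw [hωn, norm_neg, ← hβ_def] at this
        exact this
      rw [hns]
      have hRβ : 0 ≤ R - β := by linarith
      exact pow_le_pow_left₀ hRβ h1 2
    have hjulia2 : R^2 * (R - β)^2 ≤ T * (R^2 - β^2) := by
      rw [hnormb] at hjulia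
      have h1 : R^2 * (R - β)^2 ≤ R^2 * Complex.normSq (h z₀ - (-b)) := by
        apply mul_le_mul_of_nonneg_left hωmb (by positivity)
      calc R^2 * (R - β)^2 ≤ R^2 * Complex.normSq (h z₀ - (-b)) := h1
        _ ≤ T * (R^2 - β^2) := hjulia
    have hlam_lower : 2 ≤ lam.re * (1 + β) := by
      have hA : 0 < R^2 - β^2 := by nlinarith
      have h1 : r₀^2 * (R^2 * (R - β)^2) ≤ r₀^2 * (T * (R^2 - β^2)) :=
        mul_le_mul_of_nonneg_left hjulia2 (by positivity)
      have h2 : (R - β)^2 ≤ (r₀^2 * T) * (R^2 - β^2) := by nlinarith [hr₀R]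
      have hRb : (0:ℝ) ≤ R - β := by linarith
      have hR1b : (0:ℝ) ≤ R - 1 := by linarith
      have h3 : (1 - β) * (R^2 - β^2) ≤ (1 + β) * (R - β)^2 := by
        nlinarith [mul_nonneg (mul_nonneg hβ0 hRb) hR1b]
      have h4' := mul_le_mul_of_nonneg_left h2 (show (0:ℝ) ≤ 1 + β by linarith)
      have h5 : 1 - β ≤ (1 + β) * (r₀^2 * T) := by
        refine le_of_mul_le_mul_right ?_ hA
        nlinarith [h3, h4']
      have h6 : (1 + β) * (r₀^2 * R^2) = (1 + β) := by rw [hr₀R]; ring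
      rw [hlam_re]
      nlinarith [h5, h6]
    -- relation to f
    have hP : p z₀ ≠ 0 := hpne z₀ hz₀ball
    have hWne : w z₀ ≠ 0 := by
      intro h0
      rw [h0, norm_zero] at hwz₀1
      norm_num at hwz₀1
    have hfderiv : deriv f z₀ = p z₀ + z₀ * deriv p z₀ := hderiv_f z₀ hz₀ball
    have hdwz₀' : deriv w z₀ = -deriv p z₀ / (p z₀)^2 := hdw z₀ hz₀ball
    have hfz₀ : f z₀ = z₀ * p z₀ := hfzp z₀
    have hWval : w z₀ = (p z₀)⁻¹ - 1 := by rw [hw_def]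
    have hWinv : (starRingEnd ℂ) (w z₀) = (w z₀)⁻¹ := by
      have h1 : w z₀ * (starRingEnd ℂ) (w z₀) = 1 := by
        rw [Complex.mul_conj]
        rw [show Complex.normSq (w z₀) = 1 by rw [hns, hwz₀1, one_pow]]
        norm_num
      exact eq_inv_of_mul_eq_one_left (by rw [mul_comm]; exact h1)
    have hfz₀ne : f z₀ ≠ 0 := by
      rw [hfz₀]
      exact mul_ne_zero hz₀ne hP
    have hlam2 : lam = (1 - z₀ * deriv f z₀ / f z₀) * ((w z₀)⁻¹ + 1) := by
      rw [hlam_def, hWinv, hfderiv, hfz₀, hdwz₀', hWval]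
      have hp1 : (p z₀)⁻¹ - 1 ≠ 0 := by rw [← hWval]; exact hWne
      have hp2 : (1:ℂ) - p z₀ ≠ 0 := by
        intro hq
        apply hWne
        rw [hWval, show p z₀ = 1 by linear_combination -hq]
        norm_num
      field_simp
      ring
    set Acx : ℂ := (w z₀)⁻¹ + 1 with hAcx_def
    have hAne : Acx ≠ 0 := by
      intro h0
      have h1 : (1:ℂ) + w z₀ = (p z₀)⁻¹ := by rw [hWval]; ring
      have h2 : (1:ℂ) + w z₀ ≠ 0 := by rw [h1]; exact inv_ne_zero hP
      apply h2
      have h3 : ((w z₀)⁻¹ + 1) * w z₀ = 0 := by rw [← hAcx_def, h0, zero_mul]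
      rw [add_mul, inv_mul_cancel₀ hWne, one_mul] at h3
      linear_combination h3
    have hnSqA : Complex.normSq Acx = 2 * Acx.re := by
      have h1 : Acx = 1 + (starRingEnd ℂ) (w z₀) := by rw [hAcx_def, ← hWinv]; ring
      have h2 : (w z₀).re * (w z₀).re + (w z₀).im * (w z₀).im = 1 := by
        have h3 : Complex.normSq (w z₀) = 1 := by rw [hns, hwz₀1, one_pow]
        rw [Complex.normSq_apply] at h3
        exact h3
      rw [h1]
      simp only [Complex.normSq_apply, Complex.add_re, Complex.add_im, Complex.one_re,
        Complex.one_im, Complex.conj_re, Complex.conj_im]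
      linear_combination h2
    have hApos : 0 < Acx.re := by
      have h2 : 0 < Complex.normSq Acx := Complex.normSq_pos.mpr hAne
      linarith [hnSqA]
    have hAinv_re : (Acx⁻¹).re = 1/2 := by
      rw [Complex.inv_re, hnSqA]
      rw [div_eq_iff (by positivity)]
      ring
    have hF_eq : z₀ * deriv f z₀ / f z₀ = 1 - lam * Acx⁻¹ := by
      rw [hlam2, mul_assoc, mul_inv_cancel₀ hAne, mul_one]
      ring
    have hFre : (z₀ * deriv f z₀ / f z₀).re = 1 - lam.re * (1/2) := by
      rw [hF_eq]
      rw [Complex.sub_re, Complex.one_re, Complex.mul_re, hlam_im, hAinv_re]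
      ring
    have hhre := hre z₀ hz₀ball hz₀ne
    have hfinal : (z₀ * deriv f z₀ / f z₀).re ≤ β/(β+1) := by
      rw [hFre]
      have h1β : 0 < β + 1 := by linarith
      rw [le_div_iff₀ h1β]
      nlinarith [hlam_lower]
    linarith [hhre, hfinal]
  -- conclusion from key
  intro z hz hz0
  have hkz := key z hz
  have hpz := hpne z hz
  have hfzz : f z / z = p z := by
    rw [hfzp z, mul_comm, mul_div_assoc, div_self hz0, mul_one]
  rw [hfzz]
  have h1 : ‖1 - p z‖ < ‖p z‖ := by
    have he : (p z)⁻¹ - 1 = (1 - p z) / p z := by field_simp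
    rw [hw_def] at hkz
    simp only at hkz
    rw [he, norm_div] at hkz
    exact (div_lt_one (norm_pos_iff.mpr hpz)).mp hkz
  have h2 : Complex.normSq (1 - p z) < Complex.normSq (p z) := by
    rw [hns, hns]
    nlinarith [norm_nonneg (1 - p z), norm_nonneg (p z)]
  have h3 : Complex.normSq (1 - p z) = 1 - 2*(p z).re + Complex.normSq (p z) := by
    simp [Complex.normSq_apply, Complex.sub_re, Complex.sub_im]
    ring
  linarith
end

section
/- If f is analytic and locally univalent on the unit disk D with f(z) = z + b z^2 + ..., |b| ≤ 1, and Re(√(f'(z))) > √((1+|b|)/8) for all z in D, then Re(f(z)/z) > 1/2 for all z in D, where √(f'(z)) denotes the analytic branch of the square root with √(f'(0)) = 1. -/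
open Complex Metric

open Set Filter Topology ComplexConjugate

lemma aux_half {w : ℂ} (h : (1:ℝ)/2 ≤ w.re) : ‖(1 - w)/w‖ ≤ 1 := by
  have hw : w ≠ 0 := by
    intro h0; rw [h0] at h; simp at h; linarith
  rw [norm_div, div_le_one (by simpa using hw)]
  have h2 : Complex.normSq (1 - w) ≤ Complex.normSq w := by
    simp only [Complex.normSq_apply, Complex.sub_re, Complex.sub_im, Complex.one_re,
      Complex.one_im]
    nlinarith
  have h3 : ‖1 - w‖^2 ≤ ‖w‖^2 := by
    rw [Complex.sq_norm, Complex.sq_norm]; exact h2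
  nlinarith [norm_nonneg (1 - w), norm_nonneg w]

lemma aux_half' {w : ℂ} (h : (1:ℝ)/2 < w.re) : ‖(1 - w)/w‖ < 1 := by
  have hw : w ≠ 0 := by
    intro h0; rw [h0] at h; simp at h; linarith
  rw [norm_div, div_lt_one (by simpa using hw)]
  have h2 : Complex.normSq (1 - w) < Complex.normSq w := by
    simp only [Complex.normSq_apply, Complex.sub_re, Complex.sub_im, Complex.one_re,
      Complex.one_im]
    nlinarith
  have h3 : ‖1 - w‖^2 < ‖w‖^2 := by
    rw [Complex.sq_norm, Complex.sq_norm]; exact h2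
  nlinarith [norm_nonneg (1 - w), norm_nonneg w]

lemma aux_ne_one {α w : ℂ} (h : ‖conj α * w‖ < 1) : (1 : ℂ) - conj α * w ≠ 0 := by
  intro h0
  have : conj α * w = 1 := by linear_combination -h0
  rw [this] at h; simp at h

lemma aux_moebius_s3 {α w : ℂ} (ha : ‖α‖ < 1) (hw : ‖w‖ < 1) :
    ‖(w - α)/(1 - conj α * w)‖ < 1 := by
  have ha' : ‖α‖ < 1 := by simpa using ha
  have hw' : ‖w‖ < 1 := by simpa using hw
  have hd : ‖conj α * w‖ < 1 := by
    rw [norm_mul, RCLike.norm_conj]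
    nlinarith [norm_nonneg α, norm_nonneg w]
  have hne := aux_ne_one hd
  rw [norm_div, div_lt_one (by simpa [norm_pos_iff] using hne)]
  have key : Complex.normSq (1 - conj α * w) - Complex.normSq (w - α)
      = (1 - Complex.normSq α) * (1 - Complex.normSq w) := by
    simp only [Complex.normSq_apply, Complex.sub_re, Complex.sub_im, Complex.one_re,
      Complex.one_im, Complex.mul_re, Complex.mul_im, Complex.conj_re, Complex.conj_im]
    ring
  have hα2 : Complex.normSq α < 1 := by
    rw [← Complex.sq_norm]; nlinarith [norm_nonneg α]
  have hw2 : Complex.normSq w < 1 := by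
    rw [← Complex.sq_norm]; nlinarith [norm_nonneg w]
  have h1 : Complex.normSq (w - α) < Complex.normSq (1 - conj α * w) := by nlinarith
  have h3 : ‖w - α‖^2 < ‖1 - conj α * w‖^2 := by
    rw [Complex.sq_norm, Complex.sq_norm]; exact h1
  nlinarith [norm_nonneg (w - α), norm_nonneg (1 - conj α * w)]

-- left-sided derivative comparison
lemma aux_slope {φ : ℝ → ℝ} {d : ℝ} (h : HasDerivAt φ d 1)
    (h0 : ∀ t ∈ Ioo (0:ℝ) 1, 0 ≤ φ t) (h1 : φ 1 = 0) : d ≤ 0 := by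
  have ht : Tendsto (slope φ 1) (𝓝[<] (1:ℝ)) (𝓝 d) :=
    (hasDerivAt_iff_tendsto_slope.mp h).mono_left
      (nhdsWithin_mono _ (fun x hx => ne_of_lt hx))
  refine le_of_tendsto ht ?_
  filter_upwards [Ioo_mem_nhdsLT_of_mem (by norm_num : (1:ℝ) ∈ Ioc (0:ℝ) 1)] with t htI
  have h2 : φ t ≥ 0 := h0 t htI
  have h3 : t - 1 < 0 := by linarith [htI.2]
  rw [slope_def_field]
  rw [div_nonpos_iff]
  left
  exact ⟨by simpa [h1] using h2, by linarith⟩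

-- derivative of normSq along a curve
lemma aux_normSq_deriv {c : ℝ → ℂ} {d : ℂ} {t : ℝ} (h : HasDerivAt c d t) :
    HasDerivAt (fun s => Complex.normSq (c s)) (2 * ((conj (c t)) * d).re) t := by
  have hre : HasDerivAt (fun s => (c s).re) d.re t :=
    (Complex.reCLM.hasFDerivAt.comp_hasDerivAt t h)
  have him : HasDerivAt (fun s => (c s).im) d.im t :=
    (Complex.imCLM.hasFDerivAt.comp_hasDerivAt t h)
  have := (hre.mul hre).add (him.mul him)
  refine (this.congr_deriv ?_).congr_of_eventuallyEq (Filter.Eventually.of_forall fun s => ?_)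
  · simp only [Complex.mul_re, Complex.conj_re, Complex.conj_im]
    ring
  · simp [Complex.normSq_apply]

lemma aux_radial {w : ℂ} {h : ℂ → ℂ} (hc : ContinuousAt h w) :
    Tendsto (fun t : ℝ => h ((t:ℂ) * w)) (𝓝[<] (1:ℝ)) (𝓝 (h w)) := by
  have h1 : Tendsto (fun t : ℝ => (t:ℂ) * w) (𝓝 (1:ℝ)) (𝓝 w) := by
    have h2 : Continuous (fun t : ℝ => (t:ℂ) * w) := by continuity
    have := h2.tendsto (1:ℝ)
    simpa using this
  exact hc.tendsto.comp (h1.mono_left nhdsWithin_le_nhds)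


set_option maxHeartbeats 4000000 in
/-- If `f(z) = z + b z² + ⋯` is analytic and locally univalent on the unit disk,
`|b| ≤ 1`, and `Re √(f'(z)) > √((1+|b|)/8)` on the disk (where `√(f')` is the
analytic branch `p` with `p² = f'` and `p(0) = 1`), then `Re(f(z)/z) > 1/2`. -/
theorem stmt_3 (f p : ℂ → ℂ) (b : ℂ)
    (hf : AnalyticOn ℂ f (ball 0 1))
    (hf0 : f 0 = 0) (hf1 : deriv f 0 = 1)
    (hfb : deriv (deriv f) 0 = 2 * b)
    (hb : ‖b‖ ≤ 1)
    (hf' : ∀ z ∈ ball (0 : ℂ) 1, deriv f z ≠ 0)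
    (hp : AnalyticOn ℂ p (ball 0 1))
    (hp0 : p 0 = 1)
    (hpsq : ∀ z ∈ ball (0 : ℂ) 1, (p z) ^ 2 = deriv f z)
    (hre : ∀ z ∈ ball (0 : ℂ) 1,
      (p z).re > Real.sqrt ((1 + ‖b‖) / 8)) :
    ∀ z ∈ ball (0 : ℂ) 1, z ≠ 0 → (f z / z).re > 1 / 2 := by
  have hfd : DifferentiableOn ℂ f (ball 0 1) :=
    (analyticOn_iff_differentiableOn isOpen_ball).mp hf
  set g : ℂ → ℂ := dslope f 0 with hg_def
  have hgd : DifferentiableOn ℂ g (ball 0 1) :=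
    (differentiableOn_dslope (ball_mem_nhds 0 one_pos)).mpr hfd
  have hg0 : g 0 = 1 := by rw [hg_def, dslope_same, hf1]
  have hfzg : ∀ z : ℂ, f z = z * g z := by
    intro z
    have h := sub_smul_dslope f 0 z
    simp only [sub_zero, hf0, smul_eq_mul] at h
    rw [hg_def]; exact h.symm
  have hDf : ∀ z ∈ ball (0:ℂ) 1, HasDerivAt f (g z + z * deriv g z) z := by
    intro z hz
    have hgz : DifferentiableAt ℂ g z := hgd.differentiableAt (isOpen_ball.mem_nhds hz)
    have h1 : HasDerivAt (fun w => w * g w) (1 * g z + z * deriv g z) z :=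
      (hasDerivAt_id z).mul hgz.hasDerivAt
    rw [one_mul] at h1
    have hfeq : f = fun w => w * g w := funext hfzg
    rw [hfeq]; exact h1
  have hfderiv : ∀ z ∈ ball (0:ℂ) 1, deriv f z = g z + z * deriv g z :=
    fun z hz => (hDf z hz).deriv
  -- deriv g 0 = b
  have hfa0 : AnalyticAt ℂ f 0 :=
    (isOpen_ball.analyticOn_iff_analyticOnNhd.mp hf) 0 (mem_ball_self one_pos)
  obtain ⟨q, hq⟩ := hfa0
  have hga : AnalyticAt ℂ g 0 := by
    rw [hg_def]; exact ⟨_, hq.has_fpower_series_dslope_fslope⟩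
  have hgb : deriv g 0 = b := by
    have hga' : AnalyticAt ℂ (deriv g) 0 := by
      obtain ⟨ε, hε, hb2⟩ := Metric.eventually_nhds_iff_ball.mp hga.eventually_analyticAt
      exact (AnalyticOnNhd.deriv (fun y hy => hb2 y hy)) 0 (mem_ball_self hε)
    have heq : (deriv f) =ᶠ[𝓝 (0:ℂ)] (fun z => g z + z * deriv g z) := by
      filter_upwards [isOpen_ball.mem_nhds (mem_ball_self one_pos)] with z hz
        using hfderiv z hz
    have h2 : deriv (deriv f) 0 = deriv (fun z => g z + z * deriv g z) 0 := heq.deriv_eq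
    have h3 : HasDerivAt (fun z => g z + z * deriv g z)
        (deriv g 0 + (1 * deriv g 0 + 0 * deriv (deriv g) 0)) 0 :=
      (hga.differentiableAt.hasDerivAt).add
        ((hasDerivAt_id (0:ℂ)).mul (hga'.differentiableAt.hasDerivAt))
    rw [hfb, h3.deriv] at h2
    have h4 : 2 * b = 2 * deriv g 0 := by rw [h2]; ring
    field_simp at h4
    exact h4.symm
  -- reduce goal
  suffices H : ∀ z ∈ ball (0:ℂ) 1, 1/2 < (g z).re by
    intro z hz hz0
    have hfz : f z / z = g z := by rw [hfzg z]; field_simp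
    rw [hfz]; exact H z hz
  by_contra hcon
  push_neg at hcon
  obtain ⟨z₀, hz₀b, hz₀le⟩ := hcon
  have hz₀lt : ‖z₀‖ < 1 := mem_ball_zero_iff.mp hz₀b
  have hsub : closedBall (0:ℂ) ‖z₀‖ ⊆ ball 0 1 := closedBall_subset_ball hz₀lt
  set S : Set ℂ := closedBall (0:ℂ) ‖z₀‖ ∩ (fun z => (g z).re) ⁻¹' (Iic (1/2)) with hS_def
  have hSclosed : IsClosed S :=
    (Complex.continuous_re.comp_continuousOn (hgd.continuousOn.mono hsub)
      ).preimage_isClosed_of_isClosed isClosed_closedBall isClosed_Iic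
  have hScompact : IsCompact S :=
    (isCompact_closedBall _ _).of_isClosed_subset hSclosed inter_subset_left
  have hz₀S : z₀ ∈ S := ⟨mem_closedBall_zero_iff.mpr le_rfl, by simpa using hz₀le⟩
  obtain ⟨z₁, hz₁S, hz₁min⟩ := hScompact.exists_isMinOn ⟨z₀, hz₀S⟩ continuous_norm.continuousOn
  set r₀ : ℝ := ‖z₁‖ with hr₀_def
  have hz₁ball : z₁ ∈ ball (0:ℂ) 1 := hsub hz₁S.1
  have hr₀lt : r₀ < 1 := mem_ball_zero_iff.mp hz₁ball
  have hr₀pos : 0 < r₀ := by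
    rcases (norm_nonneg z₁).lt_or_eq with h0 | h0
    · exact h0
    · exfalso
      have hz10 : z₁ = 0 := norm_eq_zero.mp h0.symm
      have h2 := hz₁S.2
      rw [hz10] at h2
      simp only [mem_preimage, hg0, Complex.one_re, mem_Iic] at h2
      linarith
  have hz₁ne : z₁ ≠ 0 := fun h => by rw [hr₀_def, h] at hr₀pos; simp at hr₀pos
  have hr₀z₀ : r₀ ≤ ‖z₀‖ := isMinOn_iff.mp hz₁min z₀ hz₀S
  -- interior strict bound
  have h_int : ∀ z : ℂ, ‖z‖ < r₀ → 1/2 < (g z).re := by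
    intro z hz
    by_contra hle
    push_neg at hle
    have hzS : z ∈ S :=
      ⟨mem_closedBall_zero_iff.mpr (hz.le.trans hr₀z₀), by simpa using hle⟩
    linarith [isMinOn_iff.mp hz₁min z hzS]
  -- sphere bound
  have h_sphere : ∀ w : ℂ, ‖w‖ = r₀ → 1/2 ≤ (g w).re := by
    intro w hw
    have hwball : w ∈ ball (0:ℂ) 1 := mem_ball_zero_iff.mpr (by rw [hw]; exact hr₀lt)
    have hgc : ContinuousAt g w :=
      (hgd.differentiableAt (isOpen_ball.mem_nhds hwball)).continuousAt
    have ht : Tendsto (fun t : ℝ => (g ((t:ℂ) * w)).re) (𝓝[<] (1:ℝ)) (𝓝 ((g w).re)) :=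
      (Complex.continuous_re.tendsto _).comp (aux_radial hgc)
    refine ge_of_tendsto ht ?_
    filter_upwards [Ioo_mem_nhdsLT_of_mem (show (1:ℝ) ∈ Ioc (0:ℝ) 1 by norm_num)] with t htI
    have hn : ‖(t:ℂ) * w‖ < r₀ := by
      rw [norm_mul, Complex.norm_real, Real.norm_eq_abs, abs_of_pos htI.1, hw]
      nlinarith [htI.1, htI.2, hr₀pos]
    exact (h_int _ hn).le

  -- the boundary point value
  set w : ℂ := g z₁ with hw_def
  have hwre : w.re = 1/2 := le_antisymm (by simpa using hz₁S.2) (h_sphere z₁ rfl)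
  have hwne : w ≠ 0 := by
    intro h; rw [h] at hwre; simp at hwre
  have hwne' : (1:ℂ) - w ≠ 0 := by
    intro h
    have hw1 : w = 1 := by linear_combination -h
    rw [hw1] at hwre; norm_num at hwre
  have hconjw : conj w = 1 - w := by
    apply Complex.ext
    · simp only [Complex.conj_re, Complex.sub_re, Complex.one_re, hwre]; norm_num
    · simp [Complex.sub_im]
  -- the functions ψ, u, v
  set ψ : ℂ → ℂ := fun z => (1 - g z) / g z with hψ_def
  have hψ0 : ψ 0 = 0 := by simp [hψ_def, hg0]
  have hgne_int : ∀ z : ℂ, ‖z‖ < r₀ → g z ≠ 0 := by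
    intro z hz h0
    have := h_int z hz; rw [h0] at this; simp at this; linarith
  have hball_sub : ball (0:ℂ) r₀ ⊆ ball 0 1 := ball_subset_ball hr₀lt.le
  have hψdiff : DifferentiableOn ℂ ψ (ball 0 r₀) :=
    ((differentiableOn_const (1:ℂ)).sub (hgd.mono hball_sub)).div (hgd.mono hball_sub)
      (fun z hz => hgne_int z (mem_ball_zero_iff.mp hz))
  have hψmaps : MapsTo ψ (ball 0 r₀) (ball (ψ 0) 1) := by
    intro z hz
    rw [hψ0, mem_ball_zero_iff]
    exact aux_half' (h_int z (mem_ball_zero_iff.mp hz))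
  set u : ℂ → ℂ := fun z => (r₀:ℂ) * dslope ψ 0 z with hu_def
  have hu_ball_le : ∀ z ∈ ball (0:ℂ) r₀, ‖u z‖ ≤ 1 := by
    intro z hz
    have h1 := Complex.norm_dslope_le_div_of_mapsTo_ball hψdiff (hψmaps.mono_right ball_subset_closedBall) hz
    have : ‖u z‖ = r₀ * ‖dslope ψ 0 z‖ := by
      rw [hu_def]; simp [norm_mul, Complex.norm_real, Real.norm_eq_abs, abs_of_pos hr₀pos]
    rw [this]
    calc r₀ * ‖dslope ψ 0 z‖ ≤ r₀ * (1/r₀) := by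
          apply mul_le_mul_of_nonneg_left _ hr₀pos.le
          exact le_trans h1 (by rw [one_div])
      _ = 1 := by field_simp
  have hudiff : DifferentiableOn ℂ u (ball 0 r₀) :=
    ((differentiableOn_dslope (ball_mem_nhds 0 hr₀pos)).mpr hψdiff).const_mul _
  have hgb' : HasDerivAt g b 0 := by
    have := (hgd.differentiableAt (isOpen_ball.mem_nhds (mem_ball_self one_pos))).hasDerivAt
    rwa [hgb] at this
  have hψ'0 : HasDerivAt ψ (-b) 0 := by
    have h1 : HasDerivAt (fun z => (1:ℂ) - g z) (0 - b) 0 := (hasDerivAt_const 0 (1:ℂ)).sub hgb'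
    have h2 := h1.div hgb' (by rw [hg0]; exact one_ne_zero)
    have h3 : ((0 - b) * g 0 - (1 - g 0) * b) / g 0 ^ 2 = -b := by rw [hg0]; ring
    rw [h3] at h2
    exact h2
  set α : ℂ := -(r₀:ℂ) * b with hα_def
  have hu0 : u 0 = α := by
    rw [hu_def]; simp only [dslope_same]
    rw [hψ'0.deriv, hα_def]; ring
  have hαnorm : ‖α‖ = r₀ * ‖b‖ := by
    rw [hα_def, norm_mul, norm_neg, Complex.norm_real, Real.norm_eq_abs, abs_of_pos hr₀pos]
  have hαlt : ‖α‖ < 1 := by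
    rw [hαnorm]
    nlinarith [hr₀pos, hr₀lt, norm_nonneg b]
  have hu_lt : ∀ z ∈ ball (0:ℂ) r₀, ‖u z‖ < 1 := by
    intro z hz
    rcases lt_or_eq_of_le (hu_ball_le z hz) with h | h
    · exact h
    · exfalso
      have hmax : IsMaxOn (norm ∘ u) (ball (0:ℂ) r₀) z := by
        intro y hy
        simp only [Function.comp_apply]
        rw [h]; exact hu_ball_le y hy
      have heq := Complex.eqOn_of_isPreconnected_of_isMaxOn_norm
        (convex_ball (0:ℂ) r₀).isPreconnected isOpen_ball hudiff hz hmax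
      have h0 := heq (mem_ball_self hr₀pos)
      simp only [Function.const_apply] at h0
      rw [hu0] at h0
      have : ‖α‖ = 1 := by rw [h0, h]
      linarith
  have hdenom : ∀ z : ℂ, ‖u z‖ ≤ 1 → (1:ℂ) - conj α * u z ≠ 0 := by
    intro z hz
    apply aux_ne_one
    rw [norm_mul, RCLike.norm_conj]
    nlinarith [norm_nonneg (u z), norm_nonneg α]
  set v : ℂ → ℂ := fun z => (u z - α) / (1 - conj α * u z) with hv_def
  have hv0 : v 0 = 0 := by
    rw [hv_def]; simp only [hu0, sub_self, zero_div]
  have hvdiff : DifferentiableOn ℂ v (ball 0 r₀) :=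
    (hudiff.sub_const α).div
      ((differentiableOn_const (1:ℂ)).sub (hudiff.const_mul (conj α)))
      (fun z hz => hdenom z (hu_ball_le z hz))
  have hvmaps : MapsTo v (ball 0 r₀) (ball (v 0) 1) := by
    intro z hz
    rw [hv0, mem_ball_zero_iff]
    exact aux_moebius_s3 hαlt (hu_lt z hz)
  have hv_le : ∀ z ∈ ball (0:ℂ) r₀, ‖v z‖ ≤ ‖z‖ / r₀ := by
    intro z hz
    have h1 := Complex.norm_dslope_le_div_of_mapsTo_ball hvdiff (hvmaps.mono_right ball_subset_closedBall) hz
    have h2 : v z = z * dslope v 0 z := by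
      have h := sub_smul_dslope v 0 z
      simp only [sub_zero, hv0, smul_eq_mul] at h
      exact h.symm
    rw [h2, norm_mul, div_eq_mul_one_div]
    exact mul_le_mul_of_nonneg_left (le_trans h1 (by rw [one_div])) (norm_nonneg z)
  -- sphere continuity facts
  have h_sphere_facts : ∀ w' : ℂ, ‖w'‖ = r₀ → ‖u w'‖ ≤ 1 ∧ ‖v w'‖ ≤ 1 := by
    intro w' hw'
    have hw'ne : w' ≠ 0 := by
      intro h; rw [h] at hw'; simp at hw'; linarith
    have hw'ball : w' ∈ ball (0:ℂ) 1 := mem_ball_zero_iff.mpr (by rw [hw']; exact hr₀lt)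
    have hgcw : ContinuousAt g w' :=
      (hgd.differentiableAt (isOpen_ball.mem_nhds hw'ball)).continuousAt
    have hgnew : g w' ≠ 0 := by
      intro h0
      have := h_sphere w' hw'
      rw [h0] at this; simp at this; linarith
    have hψc : ContinuousAt ψ w' := (continuousAt_const.sub hgcw).div hgcw hgnew
    have hucont : ContinuousAt u w' :=
      continuousAt_const.mul ((continuousAt_dslope_of_ne hw'ne).mpr hψc)
    have hio : ∀ᶠ (t:ℝ) in 𝓝[<] (1:ℝ), t ∈ Ioo (0:ℝ) 1 :=
      Ioo_mem_nhdsLT_of_mem (show (1:ℝ) ∈ Ioc (0:ℝ) 1 by norm_num)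
    have hmem : ∀ t : ℝ, t ∈ Ioo (0:ℝ) 1 → ((t:ℂ) * w') ∈ ball (0:ℂ) r₀ := by
      intro t ht
      rw [mem_ball_zero_iff, norm_mul, Complex.norm_real, Real.norm_eq_abs,
        abs_of_pos ht.1, hw']
      nlinarith [ht.1, ht.2, hr₀pos]
    have hule : ‖u w'‖ ≤ 1 := by
      have ht : Tendsto (fun t : ℝ => ‖u ((t:ℂ) * w')‖) (𝓝[<] (1:ℝ)) (𝓝 ‖u w'‖) :=
        (continuous_norm.tendsto _).comp (aux_radial hucont)
      refine le_of_tendsto ht ?_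
      filter_upwards [hio] with t htI
      exact hu_ball_le _ (hmem t htI)
    refine ⟨hule, ?_⟩
    have hvcont : ContinuousAt v w' :=
      (hucont.sub continuousAt_const).div
        (continuousAt_const.sub (continuousAt_const.mul hucont)) (hdenom w' hule)
    have ht : Tendsto (fun t : ℝ => ‖v ((t:ℂ) * w')‖) (𝓝[<] (1:ℝ)) (𝓝 ‖v w'‖) :=
      (continuous_norm.tendsto _).comp (aux_radial hvcont)
    refine le_of_tendsto ht ?_
    filter_upwards [hio] with t htI
    have := hv_le _ (hmem t htI)
    have h2 : ‖(t:ℂ) * w'‖ / r₀ ≤ 1 := by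
      rw [norm_mul, Complex.norm_real, Real.norm_eq_abs, abs_of_pos htI.1, hw']
      rw [div_le_one hr₀pos]
      nlinarith [htI.2, hr₀pos]
    linarith

  -- derivatives at z₁
  have hgz₁diff : DifferentiableAt ℂ g z₁ := hgd.differentiableAt (isOpen_ball.mem_nhds hz₁ball)
  set g' : ℂ := deriv g z₁ with hg'_def
  have hDg : HasDerivAt g g' z₁ := hgz₁diff.hasDerivAt
  set dψ : ℂ := -g' / w^2 with hdψ_def
  have hDψ : HasDerivAt ψ dψ z₁ := by
    have h1 : HasDerivAt (fun z => (1:ℂ) - g z) (0 - g') z₁ := (hasDerivAt_const z₁ (1:ℂ)).sub hDg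
    have h2 := h1.div hDg (by rw [← hw_def]; exact hwne)
    have h3 : ((0 - g') * g z₁ - (1 - g z₁) * g') / g z₁ ^ 2 = dψ := by
      rw [← hw_def, hdψ_def]
      field_simp
      ring
    rwa [h3] at h2
  have hψz₁ : ψ z₁ = (1 - w) / w := by rw [hψ_def]
  have hu_ev : u =ᶠ[𝓝 z₁] (fun z => (r₀:ℂ) * (ψ z / z)) := by
    filter_upwards [compl_singleton_mem_nhds hz₁ne] with z hz
    have hzne : z ≠ 0 := hz
    have huz : u z = (r₀:ℂ) * dslope ψ 0 z := by rw [hu_def]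
    rw [huz, dslope_of_ne _ hzne, slope_def_field, hψ0, sub_zero, sub_zero]
  set du : ℂ := (r₀:ℂ) * ((dψ * z₁ - ψ z₁) / z₁^2) with hdu_def
  have hDu : HasDerivAt u du z₁ := by
    have h1 : HasDerivAt (fun z => ψ z / z) ((dψ * z₁ - ψ z₁ * 1) / z₁^2) z₁ :=
      hDψ.div (hasDerivAt_id z₁) hz₁ne
    have h2 := h1.const_mul (r₀:ℂ)
    have h3 : HasDerivAt (fun z => (r₀:ℂ) * (ψ z / z)) du z₁ := by
      rw [show du = (r₀:ℂ) * ((dψ * z₁ - ψ z₁ * 1) / z₁^2) by rw [hdu_def, mul_one]]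
      exact h2
    exact h3.congr_of_eventuallyEq hu_ev
  set u₁ : ℂ := u z₁ with hu₁_def
  have hu₁val : u₁ = (r₀:ℂ) * (ψ z₁ / z₁) := hu_ev.eq_of_nhds
  have h1w : ‖(1:ℂ) - w‖ = ‖w‖ := by rw [← hconjw]; exact RCLike.norm_conj _
  have hu₁norm : ‖u₁‖ = 1 := by
    rw [hu₁val, hψz₁, norm_mul, norm_div, norm_div, Complex.norm_real, Real.norm_eq_abs,
      abs_of_pos hr₀pos, h1w, ← hr₀_def]
    have hwabs : ‖w‖ ≠ 0 := by
      simpa using hwne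
    field_simp
  set A : ℂ := 1 - conj α * u₁ with hA_def
  have hAne : A ≠ 0 := hdenom z₁ hu₁norm.le
  set nα : ℝ := Complex.normSq α with hnα_def
  set dv : ℂ := du * (1 - (nα:ℂ)) / A^2 with hdv_def
  have hcm : conj α * α = (nα:ℂ) := by
    rw [hnα_def, mul_comm, Complex.mul_conj]
  have hDv : HasDerivAt v dv z₁ := by
    have h1 : HasDerivAt (fun z => u z - α) du z₁ := hDu.sub_const α
    have h2 : HasDerivAt (fun z => (1:ℂ) - conj α * u z) (0 - conj α * du) z₁ :=
      (hasDerivAt_const z₁ (1:ℂ)).sub (hDu.const_mul (conj α))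
    have h3 := h1.div h2 hAne
    have hval : (du * (1 - conj α * u z₁) - (u z₁ - α) * (0 - conj α * du))
        / (1 - conj α * u z₁)^2 = dv := by
      rw [← hu₁_def, ← hA_def, hdv_def]
      rw [div_eq_div_iff (pow_ne_zero 2 hAne) (pow_ne_zero 2 hAne), hA_def]
      linear_combination -A^2 * du * hcm
    rwa [hval] at h3

  set V : ℂ := v z₁ with hV_def
  have hVval : V = (u₁ - α) / A := rfl
  have hu₁c : u₁ * conj u₁ = 1 := by
    rw [Complex.mul_conj]
    norm_cast
    rw [Complex.normSq_eq_norm_sq, hu₁norm]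
    norm_num
  have hAu : (conj u₁ - conj α) * u₁ = A := by
    rw [hA_def]
    linear_combination hu₁c
  have hVA : V * A = u₁ - α := by rw [hVval]; field_simp
  have hcVA : conj V * conj A = conj u₁ - conj α := by
    have h := congrArg conj hVA
    simpa [map_mul, map_sub] using h
  have hVnormSq : Complex.normSq V = 1 := by
    have hid : (u₁ - α) * conj (u₁ - α) = A * conj A := by
      simp only [map_sub]
      have hcA : conj A = 1 - α * conj u₁ := by
        rw [hA_def]; simp [map_sub, map_mul, Complex.conj_conj]
      rw [hcA, hA_def]
      linear_combination (1 - α * conj α) * hu₁c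
    have h2 : (Complex.normSq (u₁ - α) : ℂ) = (Complex.normSq A : ℂ) := by
      rw [← Complex.mul_conj, ← Complex.mul_conj]; exact hid
    have h3 : Complex.normSq (u₁ - α) = Complex.normSq A := by exact_mod_cast h2
    have hAnz : Complex.normSq A ≠ 0 := by
      simpa [Complex.normSq_eq_zero] using hAne
    rw [hVval, map_div₀, h3]
    field_simp
  set W : ℂ := z₁ * dv with hW_def
  have hcurve : HasDerivAt (fun t : ℝ => v ((t:ℂ) * z₁)) W 1 := by
    have hmul : HasDerivAt (fun z : ℂ => z * z₁) z₁ 1 := by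
      simpa using (hasDerivAt_id (1:ℂ)).mul_const z₁
    have hDv' : HasDerivAt v dv ((1:ℂ) * z₁) := by rwa [one_mul]
    have h1 := HasDerivAt.comp (1:ℂ) hDv' hmul
    have h2 : HasDerivAt (fun z : ℂ => v (z * z₁)) (dv * z₁) 1 := h1
    have h3 := h2.comp_ofReal (z := 1)
    have h4 : HasDerivAt (fun t : ℝ => v ((t:ℂ) * z₁)) (dv * z₁) 1 := by
      simpa using h3
    rwa [hW_def, mul_comm]
  have hKre : 1 ≤ (conj V * W).re := by
    have hN : HasDerivAt (fun t : ℝ => Complex.normSq (v ((t:ℂ) * z₁)))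
        (2 * (conj V * W).re) 1 := by
      have h := aux_normSq_deriv hcurve
      have hone : (((1:ℝ):ℂ) * z₁) = z₁ := by norm_num
      rw [hone] at h
      rwa [← hV_def] at h
    have hφ : HasDerivAt (fun t : ℝ => t^2 - Complex.normSq (v ((t:ℂ) * z₁)))
        (2*1^1 - 2 * (conj V * W).re) 1 := (hasDerivAt_pow 2 (1:ℝ)).sub hN
    have hd := aux_slope hφ ?_ ?_
    · linarith
    · intro t ht
      have hmem : ((t:ℂ) * z₁) ∈ ball (0:ℂ) r₀ := by
        rw [mem_ball_zero_iff, norm_mul, Complex.norm_real, Real.norm_eq_abs,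
          abs_of_pos ht.1, ← hr₀_def]
        nlinarith [ht.1, ht.2, hr₀pos]
      have h1 := hv_le _ hmem
      have h2 : ‖(t:ℂ) * z₁‖ / r₀ = t := by
        rw [norm_mul, Complex.norm_real, Real.norm_eq_abs, abs_of_pos ht.1, ← hr₀_def]
        field_simp
      rw [h2] at h1
      have h3 : Complex.normSq (v ((t:ℂ) * z₁)) ≤ t^2 := by
        rw [Complex.normSq_eq_norm_sq]
        nlinarith [norm_nonneg (v ((t:ℂ) * z₁)), ht.1.le]
      linarith
    · have hone : (((1:ℝ):ℂ) * z₁) = z₁ := by norm_num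
      rw [hone, ← hV_def, hVnormSq]
      norm_num
  have hKim : (conj V * W).im = 0 := by
    have hexp : HasDerivAt (fun z : ℂ => Complex.exp (z * Complex.I) * z₁)
        (Complex.I * z₁) 0 := by
      have h1 : HasDerivAt (fun z : ℂ => z * Complex.I) ((1:ℂ) * Complex.I) 0 :=
        (hasDerivAt_id (0:ℂ)).mul_const _
      have h2 : HasDerivAt Complex.exp (Complex.exp ((0:ℂ) * Complex.I)) ((0:ℂ) * Complex.I) :=
        Complex.hasDerivAt_exp _
      have h3 := (HasDerivAt.comp (0:ℂ) h2 h1).mul_const z₁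
      exact h3.congr_deriv (by simp)
    have hpt : Complex.exp ((0:ℂ) * Complex.I) * z₁ = z₁ := by simp
    have hDv'' : HasDerivAt v dv (Complex.exp ((0:ℂ) * Complex.I) * z₁) := by rwa [hpt]
    have h5 := HasDerivAt.comp (0:ℂ) hDv'' hexp
    have h6 : HasDerivAt (fun θ : ℝ => v (Complex.exp ((θ:ℂ) * Complex.I) * z₁))
        (dv * (Complex.I * z₁)) 0 := by
      have := h5.comp_ofReal (z := 0)
      simpa using this
    have hJ : HasDerivAt (fun θ : ℝ => Complex.normSq (v (Complex.exp ((θ:ℂ) * Complex.I) * z₁)))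
        (2 * (conj V * (dv * (Complex.I * z₁))).re) 0 := by
      have h := aux_normSq_deriv h6
      have hzero : (Complex.exp (((0:ℝ):ℂ) * Complex.I) * z₁) = z₁ := by
        norm_num
      rw [hzero, ← hV_def] at h
      exact h
    have hmax : IsLocalMax
        (fun θ : ℝ => Complex.normSq (v (Complex.exp ((θ:ℂ) * Complex.I) * z₁))) 0 := by
      apply Filter.Eventually.of_forall
      intro θ
      have hnorm : ‖Complex.exp ((θ:ℂ) * Complex.I) * z₁‖ = r₀ := by
        rw [norm_mul, Complex.norm_exp_ofReal_mul_I, one_mul, ← hr₀_def]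
      have h1 := (h_sphere_facts _ hnorm).2
      have hzero : (Complex.exp (((0:ℝ):ℂ) * Complex.I) * z₁) = z₁ := by
        norm_num
      show Complex.normSq (v (Complex.exp ((θ:ℂ) * Complex.I) * z₁))
          ≤ Complex.normSq (v (Complex.exp (((0:ℝ):ℂ) * Complex.I) * z₁))
      rw [hzero, ← hV_def, hVnormSq, Complex.normSq_eq_norm_sq]
      nlinarith [norm_nonneg (v (Complex.exp ((θ:ℂ) * Complex.I) * z₁))]
    have hz := hmax.deriv_eq_zero
    rw [hJ.deriv] at hz
    have h7 : (conj V * (dv * (Complex.I * z₁))).re = (Complex.I * (conj V * W)).re := by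
      rw [hW_def]; ring_nf
    rw [h7] at hz
    have h8 : (Complex.I * (conj V * W)).re = -(conj V * W).im := by
      simp [Complex.mul_re]
    rw [h8] at hz
    linarith

  -- the key quantity k
  set kc : ℂ := -(z₁ * g') / ((Complex.normSq w : ℝ) : ℂ) with hkc_def
  have hnwne : ((Complex.normSq w : ℝ) : ℂ) ≠ 0 := by
    simpa [Complex.ofReal_eq_zero, Complex.normSq_eq_zero] using hwne
  have hnwval : ((Complex.normSq w : ℝ) : ℂ) = w * (1 - w) := by
    rw [← Complex.mul_conj, hconjw]
  have hstep1 : z₁ * du = u₁ * (kc - 1) := by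
    rw [hdu_def, hu₁val, hψz₁, hdψ_def, hkc_def, hnwval]
    field_simp
  have hWA : W * A^2 = u₁ * (kc - 1) * (1 - (nα:ℂ)) := by
    have h0 : W * A^2 = z₁ * du * (1 - (nα:ℂ)) := by
      rw [hW_def, hdv_def]; field_simp
    rw [h0]
    linear_combination (1 - (nα:ℂ)) * hstep1
  have hcAne : conj A ≠ 0 := by
    intro h0; apply hAne
    have h := congrArg conj h0
    simpa using h
  have hkey' : ((conj V * W) * ((Complex.normSq A : ℝ):ℂ)) * A
      = ((kc - 1) * (1 - (nα:ℂ))) * A := by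
    rw [show ((Complex.normSq A : ℝ):ℂ) = A * conj A from (Complex.mul_conj A).symm]
    linear_combination (W * A^2) * hcVA + (conj u₁ - conj α) * hWA
      + ((kc - 1) * (1 - (nα:ℂ))) * hAu
  have hkey : (conj V * W) * ((Complex.normSq A : ℝ):ℂ) = (kc - 1) * (1 - (nα:ℂ)) :=
    mul_right_cancel₀ hAne hkey'
  -- real consequences
  have hnsA_pos : (0:ℝ) < Complex.normSq A := Complex.normSq_pos.mpr hAne
  have hnα_eq : nα = ‖α‖^2 := by
    rw [hnα_def, Complex.normSq_eq_norm_sq]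
  have hnα_lt : nα < 1 := by
    rw [hnα_eq]; nlinarith [norm_nonneg α, hαlt]
  have hkim : kc.im = 0 := by
    have h := congrArg Complex.im hkey
    simp only [Complex.mul_im, Complex.ofReal_re, Complex.ofReal_im, Complex.sub_im,
      Complex.sub_re, Complex.one_im, Complex.one_re, hKim, mul_zero, zero_mul,
      add_zero, zero_add] at h
    have h2 : kc.im * (1 - nα) = 0 := by linarith
    have h3 : (1:ℝ) - nα ≠ 0 := by linarith
    exact (mul_eq_zero.mp h2).resolve_right h3
  have hkre : (conj V * W).re * Complex.normSq A = (kc.re - 1) * (1 - nα) := by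
    have h := congrArg Complex.re hkey
    simp only [Complex.mul_re, Complex.ofReal_re, Complex.ofReal_im, Complex.sub_im,
      Complex.sub_re, Complex.one_im, Complex.one_re, hKim, mul_zero, zero_mul,
      sub_zero] at h
    rw [Complex.mul_re]
    linarith
  -- norm lower bound for A
  have hAlow : 1 - ‖α‖ ≤ ‖A‖ := by
    have h1 : ‖(1:ℂ)‖ - ‖conj α * u₁‖ ≤ ‖(1:ℂ) - conj α * u₁‖ := norm_sub_norm_le _ _
    have h2 : ‖conj α * u₁‖ = ‖α‖ := by
      rw [norm_mul, RCLike.norm_conj, hu₁norm, mul_one]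
    rw [h2, norm_one] at h1
    rw [hA_def]
    exact h1
  have hnsA_low : (1 - ‖α‖)^2 ≤ Complex.normSq A := by
    rw [Complex.normSq_eq_norm_sq]
    nlinarith [norm_nonneg α, hαlt]
  -- quantitative bound on kc.re
  have hbound : (kc.re - 1) * (1 - nα) ≥ (1 - ‖α‖)^2 := by
    nlinarith [hKre, hnsA_pos, hnsA_low, hkre]
  have hkr2 : 2 ≤ kc.re * (1 + ‖α‖) := by
    rw [hnα_eq] at hbound
    nlinarith [hαlt, norm_nonneg α]
  have hkr_pos : 0 < kc.re := by nlinarith [norm_nonneg α, hαlt]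
  have habs_le : ‖α‖ ≤ ‖b‖ := by
    rw [hαnorm]
    nlinarith [hr₀lt, norm_nonneg b, hr₀pos]
  have hkrt : 2 ≤ kc.re * (1 + ‖b‖) := by nlinarith [habs_le, hkr_pos]
  -- the final contradiction
  have hpz : (p z₁)^2 = w - kc * ((Complex.normSq w : ℝ):ℂ) := by
    have h1 := hpsq z₁ hz₁ball
    rw [hfderiv z₁ hz₁ball, ← hw_def, ← hg'_def] at h1
    have h2 : z₁ * g' = -(kc * ((Complex.normSq w : ℝ):ℂ)) := by
      rw [hkc_def]; field_simp
    rw [h1, h2]; ring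
  have hre_eq : (p z₁).re^2 - (p z₁).im^2 = w.re - kc.re * Complex.normSq w := by
    have h := congrArg Complex.re hpz
    rw [pow_two, Complex.mul_re] at h
    simp only [Complex.sub_re, Complex.mul_re, Complex.ofReal_re, Complex.ofReal_im,
      hkim, mul_zero, zero_mul, sub_zero] at h
    nlinarith [h]
  have him_eq : 2 * (p z₁).re * (p z₁).im = w.im := by
    have h := congrArg Complex.im hpz
    rw [pow_two, Complex.mul_im] at h
    simp only [Complex.sub_im, Complex.mul_im, Complex.ofReal_re, Complex.ofReal_im,
      hkim, mul_zero, zero_mul, add_zero, sub_zero, zero_add] at h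
    linarith
  have hnw14 : Complex.normSq w = 1/4 + w.im^2 := by
    rw [Complex.normSq_apply, hwre]; ring
  have hx := hre z₁ hz₁ball
  have hx2 : (1 + ‖b‖)/8 < (p z₁).re^2 := by
    have h0 : (0:ℝ) ≤ (1 + ‖b‖)/8 := by positivity
    nlinarith [Real.sq_sqrt h0, Real.sqrt_nonneg ((1 + ‖b‖)/8), hx]
  have h41 : 1 < 4 * kc.re * (p z₁).re^2 := by
    nlinarith [hkrt, hkr_pos, hx2, norm_nonneg b]
  have hE3 : (p z₁).re^2 - (p z₁).im^2
      = 1/2 - kc.re * (1/4 + (2 * (p z₁).re * (p z₁).im)^2) := by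
    rw [him_eq, ← hnw14, ← hwre]; exact hre_eq
  have hm1 : 0 ≤ (p z₁).im^2 * (4 * kc.re * (p z₁).re^2 - 1) :=
    mul_nonneg (sq_nonneg _) (by linarith)
  nlinarith [hE3, h41, hm1, sq_nonneg (kc.re - 1), hkr_pos]
end

section
/- Let b ∈ ℝ with 0 ≤ b ≤ 1, and let ρ, σ be real numbers with σ ≤ −(1/(1+b))(1+ρ²). Set ζ = (1 + σ + iρ)/2 = ξ + iη. Then ξ + √(ξ² + η²) ≤ (1+b)/4, and consequently Re(√ζ) ≤ √((1+b)/8), where √ζ denotes the principal square root. -/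
open Complex

/-- Parabola admissibility: if `σ ≤ −(1/(1+b))(1+ρ²)` and
`ζ = (1+σ+iρ)/2 = ξ+iη`, then `ξ + √(ξ²+η²) ≤ (1+b)/4` and
`Re √ζ ≤ √((1+b)/8)` for the principal square root. -/
theorem stmt_12 (b ρ σ : ℝ) (hb0 : 0 ≤ b) (hb1 : b ≤ 1)
    (hσ : σ ≤ -(1 / (1 + b)) * (1 + ρ ^ 2))
    (ξ η : ℝ) (hξ : ξ = (1 + σ) / 2) (hη : η = ρ / 2)
    (ζ : ℂ) (hζ : ζ = (1 + (σ : ℂ) + Complex.I * (ρ : ℂ)) / 2) :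
    ξ + Real.sqrt (ξ ^ 2 + η ^ 2) ≤ (1 + b) / 4 ∧
      (ζ ^ ((1 / 2 : ℂ))).re ≤ Real.sqrt ((1 + b) / 8) := by
  have hb : (0:ℝ) < 1 + b := by linarith
  have h1 : σ * (1 + b) ≤ -(1 + ρ ^ 2) := by
    have h : σ ≤ (-(1 + ρ ^ 2)) / (1 + b) := by
      calc σ ≤ -(1 / (1 + b)) * (1 + ρ ^ 2) := hσ
        _ = (-(1 + ρ ^ 2)) / (1 + b) := by ring
    exact (le_div_iff₀ hb).mp h
  have hxb : ξ ≤ (1 + b) / 4 - 0 := by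
    rw [hξ]; nlinarith [sq_nonneg ρ, sq_nonneg (1 - b)]
  have hRnn : 0 ≤ (1 + b) / 4 - ξ := by linarith
  have hsq : ξ ^ 2 + η ^ 2 ≤ ((1 + b) / 4 - ξ) ^ 2 := by
    rw [hξ, hη]; nlinarith [sq_nonneg (1 - b), sq_nonneg ρ]
  have hsqrt : Real.sqrt (ξ ^ 2 + η ^ 2) ≤ (1 + b) / 4 - ξ := by
    calc Real.sqrt (ξ ^ 2 + η ^ 2) ≤ Real.sqrt (((1 + b) / 4 - ξ) ^ 2) :=
          Real.sqrt_le_sqrt hsq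
      _ = (1 + b) / 4 - ξ := Real.sqrt_sq hRnn
  have part1 : ξ + Real.sqrt (ξ ^ 2 + η ^ 2) ≤ (1 + b) / 4 := by linarith
  refine ⟨part1, ?_⟩
  have hzeq : ζ = (ξ : ℂ) + (η : ℂ) * Complex.I := by
    rw [hζ, hξ, hη]; push_cast; ring
  have hre : ζ.re = ξ := by rw [hzeq]; simp
  have him : ζ.im = η := by rw [hzeq]; simp
  set w := ζ ^ ((1 / 2 : ℂ)) with hw
  have hw2 : w ^ 2 = ζ := by
    have h2 : ((1:ℂ)/2) = ((2:ℕ):ℂ)⁻¹ := by norm_num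
    rw [hw, h2]
    exact Complex.cpow_nat_inv_pow ζ two_ne_zero
  have hre2 : w.re * w.re - w.im * w.im = ξ := by
    have h : (w * w).re = ζ.re := by rw [← sq, hw2]
    rwa [Complex.mul_re, hre] at h
  have hns : Complex.normSq w = Real.sqrt (ξ ^ 2 + η ^ 2) := by
    have h : Complex.normSq w ^ 2 = ξ ^ 2 + η ^ 2 := by
      have h2 : Complex.normSq (w ^ 2) = Complex.normSq ζ := by rw [hw2]
      rw [map_pow] at h2
      rw [h2, Complex.normSq_apply, hre, him]; ring
    calc Complex.normSq w = Real.sqrt (Complex.normSq w ^ 2) :=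
          (Real.sqrt_sq (Complex.normSq_nonneg w)).symm
      _ = Real.sqrt (ξ ^ 2 + η ^ 2) := by rw [h]
  have hns' : w.re * w.re + w.im * w.im = Real.sqrt (ξ ^ 2 + η ^ 2) := by
    rw [← Complex.normSq_apply, hns]
  have hre8 : w.re ^ 2 ≤ (1 + b) / 8 := by nlinarith [part1]
  calc w.re ≤ |w.re| := le_abs_self _
    _ = Real.sqrt (w.re ^ 2) := (Real.sqrt_sq_eq_abs _).symm
    _ ≤ Real.sqrt ((1 + b) / 8) := Real.sqrt_le_sqrt hre8
end

section
/- Let α ∈ [5/8, 2/3], let b be real with 4(|b|+4)α² − 3(|b|+6)α + 5 = 0 and 0 ≤ |b| ≤ 1/2, and let m ≥ 1 + ((2α−1)/α − |b|)/((2α−1)/α + |b|). Define q(ζ) = α(1−ζ)/((α−1)ζ + α). Then for every ζ on the unit circle with ζ ≠ 1, Re( q(ζ) + m ζ q'(ζ)/q(ζ) ) ≥ 3/2. -/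
open Complex

set_option maxHeartbeats 1000000

/-- Boundary admissibility estimate for the Möbius map
`q(ζ) = α(1−ζ)/((α−1)ζ+α)`: under the stated conditions on `α`, `b`, `m`,
for all `ζ` on the unit circle with `ζ ≠ 1`,
`Re(q(ζ) + m ζ q'(ζ)/q(ζ)) ≥ 3/2`. -/
theorem stmt_15 (α b m : ℝ)
    (hα : α ∈ Set.Icc (5 / 8 : ℝ) (2 / 3))
    (hb : |b| ≤ 1 / 2)
    (heq : 4 * (|b| + 4) * α ^ 2 - 3 * (|b| + 6) * α + 5 = 0)
    (hm : m ≥ 1 + ((2 * α - 1) / α - |b|) / ((2 * α - 1) / α + |b|))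
    (q : ℂ → ℂ)
    (hq : ∀ ζ : ℂ, q ζ = (α : ℂ) * (1 - ζ) / (((α : ℂ) - 1) * ζ + (α : ℂ))) :
    ∀ ζ : ℂ, ‖ζ‖ = 1 → ζ ≠ 1 →
      (q ζ + (m : ℂ) * ζ * deriv q ζ / q ζ).re ≥ 3 / 2 := by
  obtain ⟨hα1, hα2⟩ := hα
  have hb0 : (0:ℝ) ≤ |b| := abs_nonneg b
  have hαpos : (0:ℝ) < α := by linarith
  have h2α : (0:ℝ) < 2 * α - 1 := by linarith
  -- key real inequality : m * (2α - 1) ≥ 3 - 4α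
  have key : m * (2 * α - 1) ≥ 3 - 4 * α := by
    have hden : (0:ℝ) < (2 * α - 1) / α + |b| := by positivity
    have h1 : 1 + ((2 * α - 1) / α - |b|) / ((2 * α - 1) / α + |b|)
        = (3 - 4 * α) / (2 * α - 1) := by
      field_simp
      nlinarith [heq]
    have h2 : m ≥ (3 - 4 * α) / (2 * α - 1) := h1 ▸ hm
    have := (div_le_iff₀ h2α).mp h2
    linarith
  intro ζ hζ hζ1
  have hqf : q = fun z : ℂ => (α : ℂ) * (1 - z) / (((α : ℂ) - 1) * z + (α : ℂ)) :=
    funext hq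
  subst hqf
  set x := ζ.re with hx
  set y := ζ.im with hy
  have hns1 : Complex.normSq ζ = 1 := by
    rw [← Complex.sq_norm, hζ]; norm_num
  have hxy : x ^ 2 + y ^ 2 = 1 := by
    simpa [Complex.normSq_apply, ← hx, ← hy, sq] using hns1
  have hxle : x ≤ 1 := by nlinarith
  have hxlt : x < 1 := by
    rcases lt_or_eq_of_le hxle with h | h
    · exact h
    · exfalso; apply hζ1
      have hy0 : y = 0 := by nlinarith
      exact Complex.ext (by simp [← hx, h]) (by simp [← hy, hy0])
  -- nonvanishing of denominators
  have hNe : (1:ℂ) - ζ ≠ 0 := sub_ne_zero.mpr (Ne.symm hζ1)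
  have hαC : (α:ℂ) ≠ 0 := by
    simpa using Complex.ofReal_ne_zero.mpr (ne_of_gt hαpos)
  have hD : ((α:ℂ) - 1) * ζ + (α:ℂ) ≠ 0 := by
    intro h
    have habs : ‖((α:ℂ) - 1) * ζ‖ = ‖(α:ℂ)‖ := by
      have : ((α:ℂ) - 1) * ζ = -(α:ℂ) := by linear_combination h
      rw [this, norm_neg]
    rw [norm_mul, hζ, mul_one] at habs
    have h1 : ‖(α:ℂ) - 1‖ = 1 - α := by
      rw [show (α:ℂ) - 1 = ((α - 1 : ℝ) : ℂ) by push_cast; ring, Complex.norm_real, Real.norm_eq_abs,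
        abs_of_nonpos (by linarith)]
      ring
    have h2 : ‖(α:ℂ)‖ = α := by
      rw [Complex.norm_real, Real.norm_eq_abs, abs_of_pos hαpos]
    rw [h1, h2] at habs
    linarith
  -- derivative
  have hd : HasDerivAt (fun z : ℂ => (α : ℂ) * (1 - z) / (((α : ℂ) - 1) * z + (α : ℂ)))
      ((α:ℂ) * (1 - 2 * α) / ((((α:ℂ) - 1) * ζ + (α:ℂ)) ^ 2)) ζ := by
    have hf : HasDerivAt (fun z : ℂ => (α : ℂ) * (1 - z)) ((α:ℂ) * (-1)) ζ :=
      ((hasDerivAt_id ζ).const_sub 1).const_mul _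
    have hg : HasDerivAt (fun z : ℂ => ((α : ℂ) - 1) * z + (α : ℂ)) ((α:ℂ) - 1) ζ := by
      simpa using (((hasDerivAt_id ζ).const_mul ((α:ℂ) - 1)).add_const (α:ℂ))
    have := hf.div hg hD
    refine HasDerivAt.congr_deriv this ?_
    congr 1
    ring
  have hderiv : deriv (fun z : ℂ => (α : ℂ) * (1 - z) / (((α : ℂ) - 1) * z + (α : ℂ))) ζ
      = (α:ℂ) * (1 - 2 * α) / ((((α:ℂ) - 1) * ζ + (α:ℂ)) ^ 2) := hd.deriv
  have hexpr : (fun z : ℂ => (α : ℂ) * (1 - z) / (((α : ℂ) - 1) * z + (α : ℂ))) ζ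
      + (m : ℂ) * ζ * deriv (fun z : ℂ => (α : ℂ) * (1 - z) / (((α : ℂ) - 1) * z + (α : ℂ))) ζ
      / ((fun z : ℂ => (α : ℂ) * (1 - z) / (((α : ℂ) - 1) * z + (α : ℂ))) ζ)
      = ((α:ℂ) * (1 - ζ) ^ 2 + (m:ℂ) * (1 - 2 * α) * ζ)
        / ((1 - ζ) * (((α:ℂ) - 1) * ζ + (α:ℂ))) := by
    simp only [hderiv]
    field_simp
  rw [hexpr]
  -- real part computation
  set A : ℂ := (α:ℂ) * (1 - ζ) ^ 2 + (m:ℂ) * (1 - 2 * α) * ζ with hA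
  set B : ℂ := (1 - ζ) * (((α:ℂ) - 1) * ζ + (α:ℂ)) with hB
  have hBre : B.re = (1 - x) * ((α - 1) * x + α) + y * ((α - 1) * y) := by
    simp only [hB, Complex.mul_re, Complex.add_re, Complex.sub_re, Complex.mul_im,
      Complex.add_im, Complex.sub_im, Complex.one_re, Complex.one_im, Complex.ofReal_re,
      Complex.ofReal_im, ← hx, ← hy]
    ring
  have hBim : B.im = (1 - x) * ((α - 1) * y) + (-y) * ((α - 1) * x + α) := by
    simp only [hB, Complex.mul_re, Complex.add_re, Complex.sub_re, Complex.mul_im,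
      Complex.add_im, Complex.sub_im, Complex.one_re, Complex.one_im, Complex.ofReal_re,
      Complex.ofReal_im, ← hx, ← hy]
    ring
  have hAre : A.re = α * ((1 - x) ^ 2 - y ^ 2) + m * (1 - 2 * α) * x := by
    simp only [hA, Complex.mul_re, Complex.add_re, Complex.sub_re, Complex.mul_im,
      Complex.add_im, Complex.sub_im, Complex.one_re, Complex.one_im, Complex.ofReal_re,
      Complex.ofReal_im, Complex.re_ofNat, Complex.im_ofNat, sq, ← hx, ← hy]
    ring
  have hAim : A.im = α * (2 * (1 - x) * (-y)) + m * (1 - 2 * α) * y := by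
    simp only [hA, Complex.mul_re, Complex.add_re, Complex.sub_re, Complex.mul_im,
      Complex.add_im, Complex.sub_im, Complex.one_re, Complex.one_im, Complex.ofReal_re,
      Complex.ofReal_im, Complex.re_ofNat, Complex.im_ofNat, sq, ← hx, ← hy]
    ring
  have hnormSq : Complex.normSq B = B.re ^ 2 + B.im ^ 2 := by
    simp [Complex.normSq_apply, sq]
  have hnsval : Complex.normSq B
      = 2 * (1 - x) * (2 * α ^ 2 - 2 * α + 1 - 2 * α * (1 - α) * x) := by
    rw [hnormSq, hBre, hBim]
    linear_combination ((α - 1) ^ 2 * y ^ 2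
      + (2 * (1 - x) * ((α - 1) * x + α) * (α - 1) + (-1 - 2 * (α - 1) * x) ^ 2)
      - (α - 1) ^ 2 * (x ^ 2 - 1)) * hxy
  have hnspos : 0 < Complex.normSq B := by
    rw [hnsval]
    have h1 : (0:ℝ) < 1 - x := by linarith
    have h2 : (0:ℝ) < 2 * α ^ 2 - 2 * α + 1 - 2 * α * (1 - α) * x := by
      nlinarith [sq_nonneg (2 * α - 1),
        mul_nonneg (mul_nonneg hαpos.le (by linarith : (0:ℝ) ≤ 1 - α))
          (by linarith : (0:ℝ) ≤ 1 - x)]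
    positivity
  rw [ge_iff_le, Complex.div_re, ← add_div, le_div_iff₀ hnspos]
  have hnum : A.re * B.re + A.im * B.im
      = 2 * (1 - x) * (α * (1 - x) + m * (2 * α - 1) / 2) := by
    rw [hAre, hAim, hBre, hBim]
    linear_combination ((α - α ^ 2) * y ^ 2
      + ((α * (1 - x) ^ 2 + m * (1 - 2 * α) * x) * (α - 1)
        - α * ((1 - x) * ((α - 1) * x + α))
        + (-2 * α * (1 - x) + m * (1 - 2 * α)) * (-1 - 2 * (α - 1) * x))
      - (α - α ^ 2) * (x ^ 2 - 1)) * hxy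
  rw [hnum, hnsval]
  have hG : 3 / 2 * (2 * α ^ 2 - 2 * α + 1 - 2 * α * (1 - α) * x)
      ≤ α * (1 - x) + m * (2 * α - 1) / 2 := by
    nlinarith [key, mul_nonneg (mul_nonneg hαpos.le (by linarith : (0:ℝ) ≤ 2 - 3 * α))
      (by nlinarith [hxy, sq_nonneg y, sq_nonneg (x + 1)] : (0:ℝ) ≤ x + 1)]
  have := mul_le_mul_of_nonneg_left hG (by linarith : (0:ℝ) ≤ 2 * (1 - x))
  linarith [this]
end

section
/- Let α ∈ [5/8, 2/3] and m ≥ 1 be real. Then for every ζ ∈ ℂ with |ζ| = 1, Re( ((m+2)α − ζ) / ((α−1)ζ + α) ) ≥ (2(m+2)α² − mα − 1)/(2α − 1). -/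
/-- Möbius estimate: for `α ∈ [5/8, 2/3]`, `m ≥ 1`, and `|ζ| = 1`,
`Re(((m+2)α − ζ)/((α−1)ζ + α)) ≥ (2(m+2)α² − mα − 1)/(2α − 1)`. -/
theorem stmt_17 (α m : ℝ) (hα : α ∈ Set.Icc (5 / 8 : ℝ) (2 / 3)) (hm : 1 ≤ m)
    (ζ : ℂ) (hζ : ‖ζ‖ = 1) :
    ((((m : ℂ) + 2) * (α : ℂ) - ζ) / (((α : ℂ) - 1) * ζ + (α : ℂ))).re ≥
      (2 * (m + 2) * α ^ 2 - m * α - 1) / (2 * α - 1) := by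
  obtain ⟨ha1, ha2⟩ := hα
  set x := ζ.re with hx
  set y := ζ.im with hy
  have hns : Complex.normSq ζ = 1 := by rw [← Complex.sq_norm, hζ]; norm_num
  have hxy : x * x + y * y = 1 := by simpa [Complex.normSq_apply] using hns
  have hx1 : -1 ≤ x := by nlinarith [sq_nonneg y, sq_nonneg (x+1)]
  have hx2 : x ≤ 1 := by nlinarith [sq_nonneg y, sq_nonneg (x-1)]
  rw [Complex.div_re]
  simp only [Complex.normSq_apply, Complex.add_re, Complex.add_im, Complex.mul_re,
    Complex.mul_im, Complex.sub_re, Complex.sub_im, Complex.ofReal_re, Complex.ofReal_im,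
    Complex.one_re, Complex.one_im]
  norm_num
  rw [← hx, ← hy, ← add_div]
  have hden : 0 < ((α - 1) * x + α) * ((α - 1) * x + α) + (α - 1) * y * ((α - 1) * y) := by
    nlinarith [mul_nonneg (mul_nonneg (sub_nonneg.2 hx2) (by linarith : (0:ℝ) ≤ α))
      (by linarith : (0:ℝ) ≤ 1 - α), sq_nonneg (2*α-1)]
  rw [div_le_div_iff₀ (by linarith : (0:ℝ) < 2*α-1) hden]
  have hma : 0 ≤ m + 1 - (m + 2) * α := by nlinarith
  have h0 : x * x + y * y - 1 = 0 := by linarith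
  have h1 : (x * x + y * y - 1) *
      ((2*α-1)*(α-1) + (2*(m+2)*α^2 - m*α - 1)*(α-1)*(α-1)) = 0 := by
    rw [h0]; ring
  nlinarith [h1, mul_nonneg (mul_nonneg (mul_nonneg (by linarith : (0:ℝ) ≤ x + 1)
    (sq_nonneg (2*α-1))) (by linarith : (0:ℝ) ≤ α)) hma]
end

section
/- Let b ∈ ℝ with 0 ≤ b ≤ 1/2 and let α ∈ [1/2, 2/3] satisfy 2α³ + 2(1−b)α² − (2b+7)α + 3 + b = 0. Let ρ, σ be real with σ ≤ −(1/2)(2 + (2(1−α) − 2b)/(2(1−α) + 2b)) · ((1−α)² + ρ²)/(1−α). Then α + ασ/(α² + ρ²) ≤ −1/2. -/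
/-- Admissibility verification for Theorem 3.3: if `0 ≤ b ≤ 1/2`,
`α ∈ [1/2, 2/3]` satisfies `2α³ + 2(1−b)α² − (2b+7)α + 3 + b = 0`, and
`σ ≤ −(1/2)(2 + (2(1−α) − 2b)/(2(1−α) + 2b))((1−α)² + ρ²)/(1−α)`, then
`α + ασ/(α² + ρ²) ≤ −1/2`. -/
theorem stmt_18 (b α ρ σ : ℝ) (hb0 : 0 ≤ b) (hb1 : b ≤ 1 / 2)
    (hα : α ∈ Set.Icc (1 / 2 : ℝ) (2 / 3))
    (hroot : 2 * α ^ 3 + 2 * (1 - b) * α ^ 2 - (2 * b + 7) * α + 3 + b = 0)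
    (hσ : σ ≤ -(1 / 2) * (2 + (2 * (1 - α) - 2 * b) / (2 * (1 - α) + 2 * b)) *
      (((1 - α) ^ 2 + ρ ^ 2) / (1 - α))) :
    α + α * σ / (α ^ 2 + ρ ^ 2) ≤ -(1 / 2) := by
  obtain ⟨hα1, hα2⟩ := hα
  have h1 : (0:ℝ) < 1 - α := by linarith
  have h2 : (0:ℝ) < 2 * (1 - α) + 2 * b := by linarith
  have hαpos : (0:ℝ) < α := by linarith
  have hD : (0:ℝ) < α ^ 2 + ρ ^ 2 := by positivity
  -- clear denominators in hσ
  have hσ' : σ * ((1 - α) * (2 * (1 - α) + 2 * b)) ≤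
      -(3 * (1 - α) + b) * ((1 - α) ^ 2 + ρ ^ 2) := by
    have h := mul_le_mul_of_nonneg_right hσ (le_of_lt (mul_pos h1 h2))
    calc σ * ((1 - α) * (2 * (1 - α) + 2 * b)) ≤
        (-(1 / 2) * (2 + (2 * (1 - α) - 2 * b) / (2 * (1 - α) + 2 * b)) *
          (((1 - α) ^ 2 + ρ ^ 2) / (1 - α))) * ((1 - α) * (2 * (1 - α) + 2 * b)) := h
      _ = -(3 * (1 - α) + b) * ((1 - α) ^ 2 + ρ ^ 2) := by
          field_simp
          ring
  -- key polynomial identity using the cubic root equation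
  have key2 : (1 - α) * (α * (3 * (1 - α) + b) * ((1 - α) ^ 2 + ρ ^ 2)
        - (α + 1 / 2) * (α ^ 2 + ρ ^ 2) * ((1 - α) * (2 * (1 - α) + 2 * b)))
      = ρ ^ 2 * (α + 1 / 2) * (2 * α - 1) * (2 * (1 - α) + 2 * b)
        + (α * (1 - α) ^ 2 + α * ρ ^ 2) *
          (2 * α ^ 3 + 2 * (1 - b) * α ^ 2 - (2 * b + 7) * α + 3 + b) := by
    ring
  rw [hroot, mul_zero, add_zero] at key2
  have hnn : 0 ≤ ρ ^ 2 * (α + 1 / 2) * (2 * α - 1) * (2 * (1 - α) + 2 * b) := by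
    have : (0:ℝ) ≤ 2 * α - 1 := by linarith
    positivity
  have key : (α + 1 / 2) * (α ^ 2 + ρ ^ 2) * ((1 - α) * (2 * (1 - α) + 2 * b))
      ≤ α * (3 * (1 - α) + b) * ((1 - α) ^ 2 + ρ ^ 2) := by
    nlinarith [key2, hnn, h1]
  -- combine
  have hσ'' := mul_le_mul_of_nonneg_left hσ' hαpos.le
  have final : (α * (α ^ 2 + ρ ^ 2) + α * σ) * ((1 - α) * (2 * (1 - α) + 2 * b))
      ≤ (-(1 / 2) * (α ^ 2 + ρ ^ 2)) * ((1 - α) * (2 * (1 - α) + 2 * b)) := by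
    nlinarith [hσ'', key]
  have final2 : α * (α ^ 2 + ρ ^ 2) + α * σ ≤ -(1 / 2) * (α ^ 2 + ρ ^ 2) :=
    le_of_mul_le_mul_right (by linarith [final]) (mul_pos h1 h2)
  rw [show α + α * σ / (α ^ 2 + ρ ^ 2)
      = (α * (α ^ 2 + ρ ^ 2) + α * σ) / (α ^ 2 + ρ ^ 2) by field_simp,
    div_le_iff₀ hD]
  linarith [final2]
end
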